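/- arXiv:1002.1104 — 4 statements merged into one kernel-verified Lean document; each statement's English description precedes it below -/
import Mathlib

section
/- In the random dataset model with common item probability p, let X ≠ Y be k-element itemsets with g = |X ∩ Y| ≥ 1. Then E[Z_X Z_Y] = Pr(support of X ≥ s and support of Y ≥ s) ≤ Σ_{i=0}^{s} C(t,i)·C(t−i,s−i)·C(t−s,s−i) · p^{(2k−g)i + 2k(s−i)}. -/
open MeasureTheory ProbabilityTheory Finset Filter Asymptotics
open scoped ENNReal

noncomputable section

namespace PaperModel

variable {Ω : Type*}

/-- Support of itemset `X` in the dataset given by the Bernoulli family `A`. -/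
def support {n t : ℕ} (A : Fin t → Fin n → Ω → Bool) (X : Finset (Fin n)) (ω : Ω) : ℕ :=
  (Finset.univ.filter fun j => ∀ i ∈ X, A j i ω = true).card

/-- Indicator `Z_X` of the event that the support of `X` is at least `s`. -/
def Z {n t : ℕ} (A : Fin t → Fin n → Ω → Bool) (s : ℕ) (X : Finset (Fin n)) (ω : Ω) : ℝ :=
  if s ≤ support A X ω then 1 else 0

/-- `Q̂_{k,s}`: the number of `k`-itemsets with support at least `s`. -/
def Qhat {n t : ℕ} (A : Fin t → Fin n → Ω → Bool) (k s : ℕ) (ω : Ω) : ℕ :=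
  ((Finset.univ.powersetCard k).filter fun X => s ≤ support A X ω).card

/-- `p_X = Pr(Z_X = 1)`. -/
def pX [MeasurableSpace Ω] (μ : Measure Ω) {n t : ℕ} (A : Fin t → Fin n → Ω → Bool)
    (s : ℕ) (X : Finset (Fin n)) : ℝ :=
  (μ {ω | s ≤ support A X ω}).toReal

/-- `E[Z_X Z_Y] = Pr(Z_X = 1 ∧ Z_Y = 1)`. -/
def pXY [MeasurableSpace Ω] (μ : Measure Ω) {n t : ℕ} (A : Fin t → Fin n → Ω → Bool)
    (s : ℕ) (X Y : Finset (Fin n)) : ℝ :=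
  (μ ({ω | s ≤ support A X ω} ∩ {ω | s ≤ support A Y ω})).toReal

/-- `b_1(s) = Σ_{|X|=k} Σ_{Y ∈ I(X)} p_X p_Y`. -/
def b1 [MeasurableSpace Ω] (μ : Measure Ω) {n t : ℕ} (A : Fin t → Fin n → Ω → Bool)
    (k s : ℕ) : ℝ :=
  ∑ X ∈ Finset.univ.powersetCard k,
    ∑ Y ∈ (Finset.univ.powersetCard k).filter (fun Y => Y ∩ X ≠ ∅),
      pX μ A s X * pX μ A s Y

/-- `b_2(s) = Σ_{|X|=k} Σ_{X ≠ Y ∈ I(X)} E[Z_X Z_Y]`. -/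
def b2 [MeasurableSpace Ω] (μ : Measure Ω) {n t : ℕ} (A : Fin t → Fin n → Ω → Bool)
    (k s : ℕ) : ℝ :=
  ∑ X ∈ Finset.univ.powersetCard k,
    ∑ Y ∈ (Finset.univ.powersetCard k).filter (fun Y => Y ∩ X ≠ ∅ ∧ Y ≠ X),
      pXY μ A s X Y

/-- Probability that a Poisson random variable with mean `lam` lands in `S ⊆ ℕ`. -/
def poissonProb (lam : ℝ) (S : Set ℕ) : ℝ :=
  ∑' j : S, Real.exp (-lam) * lam ^ (j : ℕ) / (Nat.factorial (j : ℕ) : ℝ)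
lemma meas_cube [MeasurableSpace Ω] (μ : Measure Ω) {n t : ℕ}
    (p : ℝ) (A : Fin t → Fin n → Ω → Bool)
    (hindep : iIndepFun (fun q : Fin t × Fin n => A q.1 q.2) μ)
    (hfreq : ∀ j i, μ {ω | A j i ω = true} = ENNReal.ofReal p)
    (Q : Finset (Fin t × Fin n)) :
    μ {ω | ∀ q ∈ Q, A q.1 q.2 ω = true} = ENNReal.ofReal p ^ Q.card := by
  have hset : {ω | ∀ q ∈ Q, A q.1 q.2 ω = true}
      = ⋂ q ∈ Q, (fun ω => A q.1 q.2 ω) ⁻¹' {true} := by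
    ext ω; simp
  rw [hset, hindep.meas_biInter (fun q _ => ⟨{true}, trivial, rfl⟩)]
  have hpre : ∀ q : Fin t × Fin n,
      (fun ω => A q.1 q.2 ω) ⁻¹' {true} = {ω | A q.1 q.2 ω = true} := by
    intro q; ext ω; simp
  simp [hpre, hfreq, Finset.prod_const]

/-- **Bound on `E[Z_X Z_Y]` for overlapping itemsets (fixed-`p` model).**
If `X ≠ Y` are `k`-itemsets with `g = |X ∩ Y| ≥ 1`, then
`E[Z_X Z_Y] = Pr(support of X ≥ s ∧ support of Y ≥ s)
  ≤ Σ_{i=0}^{s} C(t,i)·C(t−i,s−i)·C(t−s,s−i) · p^{(2k−g)i + 2k(s−i)}`. -/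
theorem EZXZY_le_fixed_p
    {Ω : Type*} [MeasurableSpace Ω] (μ : Measure Ω) [IsProbabilityMeasure μ]
    {n t : ℕ} (hn : 1 ≤ n)
    (p : ℝ) (hp : p ∈ Set.Icc (0:ℝ) 1)
    (A : Fin t → Fin n → Ω → Bool)
    (hmeas : ∀ j i, Measurable (A j i))
    (hindep : iIndepFun
      (fun q : Fin t × Fin n => A q.1 q.2) μ)
    (hfreq : ∀ j i, μ {ω | A j i ω = true} = ENNReal.ofReal p)
    (k s g : ℕ) (hk : 1 ≤ k) (hs : 1 ≤ s) (hst : s ≤ t)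
    (X Y : Finset (Fin n)) (hX : X.card = k) (hY : Y.card = k) (hne : X ≠ Y)
    (hg : (X ∩ Y).card = g) (hg1 : 1 ≤ g) :
    pXY μ A s X Y
      ≤ ∑ i ∈ Finset.range (s + 1),
          (t.choose i : ℝ) * ((t - i).choose (s - i) : ℝ) * ((t - s).choose (s - i) : ℝ)
            * p ^ ((2 * k - g) * i + 2 * k * (s - i)) := by
  classical
  obtain ⟨hp0, hp1⟩ := hp
  have hgk : g ≤ k := by
    rw [← hg, ← hX]; exact Finset.card_le_card Finset.inter_subset_left
  set P : ℝ≥0∞ := ENNReal.ofReal p with hP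
  set e : ℕ → ℕ := fun i => (2 * k - g) * i + 2 * k * (s - i) with he
  set F : Finset (Fin t) → Finset (Fin t) → Set Ω :=
    fun S T => {ω | ∀ q ∈ (S ×ˢ X) ∪ (T ×ˢ Y), A q.1 q.2 ω = true} with hF
  -- measure of one covering event
  have hmeasF : ∀ S T : Finset (Fin t), S.card = s → T.card = s →
      (S ∩ T).card ≤ s → μ (F S T) = P ^ (e (S ∩ T).card) := by
    intro S T hS hT hi
    have h0 := meas_cube μ p A hindep hfreq ((S ×ˢ X) ∪ (T ×ˢ Y))
    rw [hF]
    rw [h0]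
    congr 1
    -- card of union of products
    have h1 := Finset.card_union_add_card_inter (S ×ˢ X) (T ×ˢ Y)
    rw [Finset.product_inter_product, Finset.card_product, Finset.card_product,
      Finset.card_product, hS, hT, hg, hX, hY] at h1
    have h2 : g * (S ∩ T).card ≤ k * (S ∩ T).card := Nat.mul_le_mul_right _ hgk
    have h3 : k * (S ∩ T).card ≤ k * s := Nat.mul_le_mul_left _ hi
    have e1 : (2 * k - g) * (S ∩ T).card = 2 * (k * (S ∩ T).card) - g * (S ∩ T).card := by
      rw [Nat.sub_mul, mul_assoc]
    have e2 : 2 * k * (s - (S ∩ T).card) = 2 * (k * s) - 2 * (k * (S ∩ T).card) := by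
      rw [mul_assoc, Nat.mul_sub, Nat.mul_sub]
    have hc : s * k = k * s := Nat.mul_comm s k
    have hc2 : (S ∩ T).card * g = g * (S ∩ T).card := Nat.mul_comm _ _
    simp only [he]
    omega
  -- the covering
  have cover : {ω | s ≤ support A X ω} ∩ {ω | s ≤ support A Y ω} ⊆
      ⋃ i ∈ Finset.range (s + 1), ⋃ I ∈ Finset.powersetCard i (Finset.univ : Finset (Fin t)),
        ⋃ S' ∈ Finset.powersetCard (s - i) Iᶜ,
          ⋃ T' ∈ Finset.powersetCard (s - i) (I ∪ S')ᶜ, F (I ∪ S') (I ∪ T') := by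
    rintro ω ⟨h1, h2⟩
    obtain ⟨S, hSsub, hScard⟩ := Finset.exists_subset_card_eq h1
    obtain ⟨T, hTsub, hTcard⟩ := Finset.exists_subset_card_eq h2
    have hiS : (S ∩ T).card ≤ s := by
      rw [← hScard]; exact Finset.card_le_card Finset.inter_subset_left
    have hIU : S ∩ T ∪ S \ T = S := by ext j; simp only [Finset.mem_union,
      Finset.mem_inter, Finset.mem_sdiff]; tauto
    have hIT : S ∩ T ∪ T \ S = T := by ext j; simp only [Finset.mem_union,
      Finset.mem_inter, Finset.mem_sdiff]; tauto
    simp only [Set.mem_iUnion]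
    refine ⟨(S ∩ T).card, ?_, S ∩ T, ?_, S \ T, ?_, T \ S, ?_, ?_⟩
    · simpa [Finset.mem_range, Nat.lt_succ_iff] using hiS
    · exact Finset.mem_powersetCard_univ.mpr rfl
    · refine Finset.mem_powersetCard.mpr ⟨?_, ?_⟩
      · intro j hj
        simp only [Finset.mem_sdiff] at hj
        simp only [Finset.mem_compl, Finset.mem_inter]
        tauto
      · rw [← Finset.sdiff_inter_self_left S T,
          Finset.card_sdiff_of_subset Finset.inter_subset_left, hScard]
    · refine Finset.mem_powersetCard.mpr ⟨?_, ?_⟩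
      · intro j hj
        simp only [Finset.mem_sdiff] at hj
        simp only [hIU, Finset.mem_compl]
        tauto
      · rw [← Finset.sdiff_inter_self_left T S,
          Finset.card_sdiff_of_subset Finset.inter_subset_left, hTcard, Finset.inter_comm]
    · rw [hIU, hIT]
      intro q hq
      rcases Finset.mem_union.mp hq with hq | hq
      · obtain ⟨hq1, hq2⟩ := Finset.mem_product.mp hq
        have := hSsub hq1
        rw [Finset.mem_filter] at this
        exact this.2 _ hq2
      · obtain ⟨hq1, hq2⟩ := Finset.mem_product.mp hq
        have := hTsub hq1
        rw [Finset.mem_filter] at this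
        exact this.2 _ hq2
  -- the key ENNReal bound
  have key : μ ({ω | s ≤ support A X ω} ∩ {ω | s ≤ support A Y ω})
      ≤ ∑ i ∈ Finset.range (s + 1),
          ((t.choose i : ℝ≥0∞) * ((t - i).choose (s - i) : ℝ≥0∞)
            * ((t - s).choose (s - i) : ℝ≥0∞)) * P ^ (e i) := by
    refine (measure_mono cover).trans ?_
    refine (measure_biUnion_finset_le _ _).trans ?_
    refine Finset.sum_le_sum fun i hi => ?_
    have his : i ≤ s := Nat.lt_succ_iff.mp (Finset.mem_range.mp hi)
    refine (measure_biUnion_finset_le _ _).trans ?_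
    have hIbound : ∀ I ∈ Finset.powersetCard i (Finset.univ : Finset (Fin t)),
        μ (⋃ S' ∈ Finset.powersetCard (s - i) Iᶜ,
          ⋃ T' ∈ Finset.powersetCard (s - i) (I ∪ S')ᶜ, F (I ∪ S') (I ∪ T'))
        ≤ (((t - i).choose (s - i) : ℝ≥0∞) * ((t - s).choose (s - i) : ℝ≥0∞)) * P ^ (e i) := by
      intro I hI
      have hIcard : I.card = i := (Finset.mem_powersetCard_univ.mp hI)
      refine (measure_biUnion_finset_le _ _).trans ?_
      have hS'bound : ∀ S' ∈ Finset.powersetCard (s - i) Iᶜ,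
          μ (⋃ T' ∈ Finset.powersetCard (s - i) (I ∪ S')ᶜ, F (I ∪ S') (I ∪ T'))
          ≤ ((t - s).choose (s - i) : ℝ≥0∞) * P ^ (e i) := by
        intro S' hS'
        obtain ⟨hS'sub, hS'card⟩ := Finset.mem_powersetCard.mp hS'
        have hdIS : Disjoint I S' := by
          rw [Finset.disjoint_right]
          intro j hj
          have := hS'sub hj
          simpa [Finset.mem_compl] using this
        have hScard : (I ∪ S').card = s := by
          rw [Finset.card_union_of_disjoint hdIS, hIcard, hS'card]
          omega
        refine (measure_biUnion_finset_le _ _).trans ?_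
        have hT'bound : ∀ T' ∈ Finset.powersetCard (s - i) (I ∪ S')ᶜ,
            μ (F (I ∪ S') (I ∪ T')) ≤ P ^ (e i) := by
          intro T' hT'
          obtain ⟨hT'sub, hT'card⟩ := Finset.mem_powersetCard.mp hT'
          have hT'I : ∀ j ∈ T', j ∉ I ∧ j ∉ S' := by
            intro j hj
            have := hT'sub hj
            simpa [Finset.mem_compl, Finset.mem_union] using this
          have hdIT : Disjoint I T' := by
            rw [Finset.disjoint_right]; intro j hj; exact (hT'I j hj).1
          have hTcard : (I ∪ T').card = s := by
            rw [Finset.card_union_of_disjoint hdIT, hIcard, hT'card]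
            omega
          have hinter : (I ∪ S') ∩ (I ∪ T') = I := by
            ext j
            simp only [Finset.mem_inter, Finset.mem_union]
            constructor
            · rintro ⟨h1 | h1, h2 | h2⟩
              · exact h1
              · exact h1
              · exact h2
              · exact absurd h1 (hT'I j h2).2
            · intro h; exact ⟨Or.inl h, Or.inl h⟩
          rw [hmeasF _ _ hScard hTcard (by rw [hinter, hIcard]; exact his)]
          rw [hinter, hIcard]
        calc ∑ T' ∈ Finset.powersetCard (s - i) (I ∪ S')ᶜ, μ (F (I ∪ S') (I ∪ T'))
            ≤ ∑ _T' ∈ Finset.powersetCard (s - i) (I ∪ S')ᶜ, P ^ (e i) :=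
              Finset.sum_le_sum hT'bound
          _ = ((Finset.powersetCard (s - i) (I ∪ S')ᶜ).card : ℝ≥0∞) * P ^ (e i) := by
              rw [Finset.sum_const, nsmul_eq_mul]
          _ = ((t - s).choose (s - i) : ℝ≥0∞) * P ^ (e i) := by
              congr 2
              rw [Finset.card_powersetCard, Finset.card_compl, Fintype.card_fin, hScard]
      calc ∑ S' ∈ Finset.powersetCard (s - i) Iᶜ,
            μ (⋃ T' ∈ Finset.powersetCard (s - i) (I ∪ S')ᶜ, F (I ∪ S') (I ∪ T'))
          ≤ ∑ _S' ∈ Finset.powersetCard (s - i) Iᶜ,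
            ((t - s).choose (s - i) : ℝ≥0∞) * P ^ (e i) := Finset.sum_le_sum hS'bound
        _ = ((Finset.powersetCard (s - i) Iᶜ).card : ℝ≥0∞)
            * (((t - s).choose (s - i) : ℝ≥0∞) * P ^ (e i)) := by
            rw [Finset.sum_const, nsmul_eq_mul]
        _ = (((t - i).choose (s - i) : ℝ≥0∞) * ((t - s).choose (s - i) : ℝ≥0∞)) * P ^ (e i) := by
            rw [Finset.card_powersetCard, Finset.card_compl, Fintype.card_fin, hIcard, mul_assoc]
    calc ∑ I ∈ Finset.powersetCard i (Finset.univ : Finset (Fin t)),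
          μ (⋃ S' ∈ Finset.powersetCard (s - i) Iᶜ,
            ⋃ T' ∈ Finset.powersetCard (s - i) (I ∪ S')ᶜ, F (I ∪ S') (I ∪ T'))
        ≤ ∑ _I ∈ Finset.powersetCard i (Finset.univ : Finset (Fin t)),
          (((t - i).choose (s - i) : ℝ≥0∞) * ((t - s).choose (s - i) : ℝ≥0∞)) * P ^ (e i) :=
          Finset.sum_le_sum hIbound
      _ = ((Finset.powersetCard i (Finset.univ : Finset (Fin t))).card : ℝ≥0∞)
          * ((((t - i).choose (s - i) : ℝ≥0∞) * ((t - s).choose (s - i) : ℝ≥0∞)) * P ^ (e i)) := by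
          rw [Finset.sum_const, nsmul_eq_mul]
      _ = ((t.choose i : ℝ≥0∞) * ((t - i).choose (s - i) : ℝ≥0∞)
          * ((t - s).choose (s - i) : ℝ≥0∞)) * P ^ (e i) := by
          rw [Finset.card_powersetCard, Finset.card_univ, Fintype.card_fin]
          ring
  -- convert to reals
  have hRHSeq : ∑ i ∈ Finset.range (s + 1),
      ((t.choose i : ℝ≥0∞) * ((t - i).choose (s - i) : ℝ≥0∞)
        * ((t - s).choose (s - i) : ℝ≥0∞)) * P ^ (e i)
      = ENNReal.ofReal (∑ i ∈ Finset.range (s + 1),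
          (t.choose i : ℝ) * ((t - i).choose (s - i) : ℝ) * ((t - s).choose (s - i) : ℝ)
            * p ^ ((2 * k - g) * i + 2 * k * (s - i))) := by
    rw [ENNReal.ofReal_sum_of_nonneg]
    · refine Finset.sum_congr rfl fun i _ => ?_
      rw [ENNReal.ofReal_mul (by positivity), ENNReal.ofReal_mul (by positivity),
        ENNReal.ofReal_mul (by positivity), ENNReal.ofReal_pow hp0,
        ENNReal.ofReal_natCast, ENNReal.ofReal_natCast, ENNReal.ofReal_natCast]
    · intro i _
      have : (0:ℝ) ≤ p ^ ((2 * k - g) * i + 2 * k * (s - i)) := pow_nonneg hp0 _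
      positivity
  rw [hRHSeq] at key
  exact ENNReal.toReal_le_of_le_ofReal
    (Finset.sum_nonneg fun i _ => by
      have : (0:ℝ) ≤ p ^ ((2 * k - g) * i + 2 * k * (s - i)) := pow_nonneg hp0 _
      positivity) key

end PaperModel
end
end

section
/- Fix integers k ≥ 2 and s ≥ 2, constants γ > 0 and 0 < c ≤ (k−1)(1−1/s), and consider for each n the random dataset model with common item probability p = γ/n and t = t(n) transactions with t(n) = Θ(n^c). Then as n → ∞, b_2(s) = O(n^{2k(1−s) + s(k−1+c) − k + 1}). -/
open MeasureTheory ProbabilityTheory Finset Filter Asymptotics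

noncomputable section

namespace PaperModel

variable {Ω : Type*}

/-- counting: number of `B` in `F` (all of card `m`) with `(B ∩ A).card = i`. -/
lemma count_inter_card_le {α : Type*} [DecidableEq α] [Fintype α] (A : Finset α) (m i : ℕ)
    (F : Finset (Finset α)) (hF : ∀ B ∈ F, B.card = m) :
    ({B ∈ F | (B ∩ A).card = i}).card ≤ A.card.choose i * (Fintype.card α) ^ (m - i) := by
  have h := Finset.card_le_card_of_injOn (fun B => (B ∩ A, B \ A))
    (s := {B ∈ F | (B ∩ A).card = i})
    (t := (A.powersetCard i) ×ˢ ((Finset.univ : Finset α).powersetCard (m - i)))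
    ?_ ?_
  · refine h.trans ?_
    rw [Finset.card_product, Finset.card_powersetCard, Finset.card_powersetCard,
      Finset.card_univ]
    exact Nat.mul_le_mul_left _ (Nat.choose_le_pow _ _)
  · intro B hB
    simp only [Finset.coe_filter, Finset.mem_filter, Set.mem_setOf_eq] at hB
    simp only [Finset.mem_coe, Finset.mem_product, Finset.mem_powersetCard]
    refine ⟨⟨Finset.inter_subset_right, hB.2⟩, ⟨Finset.subset_univ _, ?_⟩⟩
    have := Finset.card_inter_add_card_sdiff B A
    have := hF B hB.1
    omega
  · intro B hB B' hB' hEq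
    simp only [Prod.mk.injEq] at hEq
    rw [← Finset.sdiff_union_inter B A, ← Finset.sdiff_union_inter B' A, hEq.1, hEq.2]

lemma sum_comp_bound {α : Type*} [DecidableEq α] [Fintype α] (A : Finset α) (m : ℕ)
    (F : Finset (Finset α)) (hF : ∀ B ∈ F, B.card = m) (I : Finset ℕ)
    (hI : ∀ B ∈ F, (B ∩ A).card ∈ I) (g : ℕ → ℝ) (hg : ∀ i, 0 ≤ g i) :
    ∑ B ∈ F, g ((B ∩ A).card)
      ≤ ∑ i ∈ I, (A.card.choose i * (Fintype.card α) ^ (m - i) : ℝ) * g i := by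
  rw [Finset.sum_comp]
  have hsub : F.image (fun B => (B ∩ A).card) ⊆ I := by
    intro b hb
    obtain ⟨B, hB, rfl⟩ := Finset.mem_image.mp hb
    exact hI B hB
  refine Finset.sum_le_sum_of_subset_of_nonneg hsub (fun i _ _ => mul_nonneg (by positivity) (hg i)) |>.trans' ?_
  refine Finset.sum_le_sum fun b _ => ?_
  rw [nsmul_eq_mul]
  refine mul_le_mul_of_nonneg_right ?_ (hg b)
  exact_mod_cast count_inter_card_le A m b F hF

section Prob

variable [MeasurableSpace Ω] {μ : Measure Ω} [IsProbabilityMeasure μ] {n t : ℕ}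
  {A : Fin t → Fin n → Ω → Bool}

lemma meas_biInter_cover
    (hindep : iIndepFun
      (fun q : Fin t × Fin n => A q.1 q.2) μ)
    {p' : ℝ} (hA : ∀ j i, μ {ω | A j i ω = true} = ENNReal.ofReal p')
    (D : Finset (Fin t × Fin n)) :
    μ (⋂ q ∈ D, {ω | A q.1 q.2 ω = true}) = ENNReal.ofReal p' ^ D.card := by
  have h := hindep.meas_biInter (S := D) (s := fun q => {ω | A q.1 q.2 ω = true}) ?_
  · rw [h]
    rw [Finset.prod_congr rfl (fun q _ => hA q.1 q.2), Finset.prod_const]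
  · intro q _
    refine ⟨{true}, trivial, ?_⟩
    ext ω; simp [Set.mem_preimage]

lemma support_subset_union (s : ℕ) (X : Finset (Fin n)) :
    {ω | s ≤ support A X ω} ⊆
      ⋃ S ∈ (Finset.univ : Finset (Fin t)).powersetCard s,
        ⋂ q ∈ S ×ˢ X, {ω | A q.1 q.2 ω = true} := by
  intro ω hω
  obtain ⟨S, hS, hcard⟩ := Finset.exists_subset_card_eq hω
  refine Set.mem_biUnion (Finset.mem_powersetCard.mpr ⟨Finset.subset_univ _, hcard⟩) ?_
  simp only [Set.mem_iInter]
  intro q hq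
  rw [Finset.mem_product] at hq
  have := hS hq.1
  rw [Finset.mem_filter] at this
  exact this.2 q.2 hq.2

lemma pXY_le_sum
    (hindep : iIndepFun
      (fun q : Fin t × Fin n => A q.1 q.2) μ)
    {p' : ℝ} (hp0 : 0 ≤ p') (hp1 : p' ≤ 1)
    (hA : ∀ j i, μ {ω | A j i ω = true} = ENNReal.ofReal p')
    (k s : ℕ) (X Y : Finset (Fin n)) (hX : X.card = k) (hY : Y.card = k) :
    pXY μ A s X Y ≤
      ∑ S ∈ (Finset.univ : Finset (Fin t)).powersetCard s,
        ∑ T ∈ (Finset.univ : Finset (Fin t)).powersetCard s,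
          p' ^ (2 * k * s - (T ∩ S).card * (Y ∩ X).card) := by
  classical
  set pc := (Finset.univ : Finset (Fin t)).powersetCard s with hpc
  set Ev : Finset (Fin t) → Finset (Fin n) → Set Ω :=
    fun S W => ⋂ q ∈ S ×ˢ W, {ω | A q.1 q.2 ω = true} with hEv
  have hsub : {ω | s ≤ support A X ω} ∩ {ω | s ≤ support A Y ω} ⊆
      ⋃ S ∈ pc, ⋃ T ∈ pc, (Ev S X ∩ Ev T Y) := by
    rintro ω ⟨h1, h2⟩
    obtain ⟨S, hS, hSω⟩ := Set.mem_iUnion₂.mp (support_subset_union s X h1)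
    obtain ⟨T, hT, hTω⟩ := Set.mem_iUnion₂.mp (support_subset_union s Y h2)
    exact Set.mem_iUnion₂.mpr ⟨S, hS, Set.mem_iUnion₂.mpr ⟨T, hT, ⟨hSω, hTω⟩⟩⟩
  have hinter : ∀ S T : Finset (Fin t),
      Ev S X ∩ Ev T Y = ⋂ q ∈ (S ×ˢ X ∪ T ×ˢ Y), {ω | A q.1 q.2 ω = true} := by
    intro S T
    ext ω
    simp only [hEv, Set.mem_inter_iff, Set.mem_iInter, Finset.mem_union]
    exact ⟨fun h q hq => hq.elim (h.1 q) (h.2 q),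
      fun h => ⟨fun q hq => h q (Or.inl hq), fun q hq => h q (Or.inr hq)⟩⟩
  have hcard : ∀ S T : Finset (Fin t), S ∈ pc → T ∈ pc →
      (S ×ˢ X ∪ T ×ˢ Y).card = s * k + s * k - (T ∩ S).card * (Y ∩ X).card := by
    intro S T hS hT
    have hS' : S.card = s := (Finset.mem_powersetCard.mp hS).2
    have hT' : T.card = s := (Finset.mem_powersetCard.mp hT).2
    have hprod : (S ×ˢ X) ∩ (T ×ˢ Y) = (S ∩ T) ×ˢ (X ∩ Y) := by
      ext q
      simp only [Finset.mem_inter, Finset.mem_product]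
      tauto
    have h := Finset.card_union_add_card_inter (S ×ˢ X) (T ×ˢ Y)
    rw [hprod, Finset.card_product, Finset.card_product, Finset.card_product,
      hS', hT', hX, hY] at h
    rw [Finset.inter_comm T S, Finset.inter_comm Y X]
    omega
  have hμEv : ∀ S T : Finset (Fin t), S ∈ pc → T ∈ pc →
      μ (Ev S X ∩ Ev T Y) = ENNReal.ofReal p' ^ (S ×ˢ X ∪ T ×ˢ Y).card := by
    intro S T hS hT
    rw [hinter S T]
    exact meas_biInter_cover hindep hA _
  have hfin : ∀ S ∈ pc, ∀ T ∈ pc, μ (Ev S X ∩ Ev T Y) ≠ ⊤ := fun S _ T _ => measure_ne_top μ _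
  have hle1 : μ ({ω | s ≤ support A X ω} ∩ {ω | s ≤ support A Y ω})
      ≤ ∑ S ∈ pc, ∑ T ∈ pc, μ (Ev S X ∩ Ev T Y) := by
    refine (measure_mono hsub).trans ?_
    refine (measure_biUnion_finset_le pc _).trans ?_
    exact Finset.sum_le_sum fun S _ => measure_biUnion_finset_le pc _
  have hsum_ne : (∑ S ∈ pc, ∑ T ∈ pc, μ (Ev S X ∩ Ev T Y)) ≠ ⊤ := by
    rw [ENNReal.sum_ne_top]
    intro S hS
    rw [ENNReal.sum_ne_top]
    intro T hT
    exact hfin S hS T hT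
  calc pXY μ A s X Y
      ≤ (∑ S ∈ pc, ∑ T ∈ pc, μ (Ev S X ∩ Ev T Y)).toReal :=
        ENNReal.toReal_mono hsum_ne hle1
    _ = ∑ S ∈ pc, ∑ T ∈ pc, (μ (Ev S X ∩ Ev T Y)).toReal := by
        rw [ENNReal.toReal_sum (fun S hS => by rw [ENNReal.sum_ne_top]; exact hfin S hS)]
        exact Finset.sum_congr rfl fun S hS => ENNReal.toReal_sum (hfin S hS)
    _ ≤ ∑ S ∈ pc, ∑ T ∈ pc, p' ^ (2 * k * s - (T ∩ S).card * (Y ∩ X).card) := by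
        refine Finset.sum_le_sum fun S hS => Finset.sum_le_sum fun T hT => ?_
        rw [hμEv S T hS hT, ENNReal.toReal_pow, ENNReal.toReal_ofReal hp0]
        refine pow_le_pow_of_le_one hp0 hp1 ?_
        rw [hcard S T hS hT]
        exact Nat.sub_le_sub_right (le_of_eq (by ring)) _

lemma b2_le_master
    (hindep : iIndepFun
      (fun q : Fin t × Fin n => A q.1 q.2) μ)
    {p' : ℝ} (hp0 : 0 ≤ p') (hp1 : p' ≤ 1)
    (hA : ∀ j i, μ {ω | A j i ω = true} = ENNReal.ofReal p')
    (k s : ℕ) (hk : 1 ≤ k) :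
    b2 μ A k s ≤ ∑ i ∈ Finset.Icc 1 (k-1), ∑ r ∈ Finset.range (s+1),
      ((n : ℝ)^k * ((k.choose i : ℝ) * (n : ℝ)^(k-i)))
        * ((t : ℝ)^s * ((s.choose r : ℝ) * (t : ℝ)^(s-r))) * p' ^ (2*k*s - i*r) := by
  classical
  set pc := (Finset.univ : Finset (Fin t)).powersetCard s with hpc
  set pk := (Finset.univ : Finset (Fin n)).powersetCard k with hpk
  set g : ℕ → ℝ := fun j => ∑ S ∈ pc, ∑ T ∈ pc,
    p' ^ (2*k*s - (T ∩ S).card * j) with hg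
  have hg0 : ∀ j, 0 ≤ g j := fun j =>
    Finset.sum_nonneg fun S _ => Finset.sum_nonneg fun T _ => pow_nonneg hp0 _
  -- step 3 : bound on g
  have hstep3 : ∀ i, g i ≤ ∑ r ∈ Finset.range (s+1),
      ((t : ℝ)^s * ((s.choose r : ℝ) * (t : ℝ)^(s-r))) * p' ^ (2*k*s - i*r) := by
    intro i
    have hper : ∀ S ∈ pc, ∑ T ∈ pc, p' ^ (2*k*s - (T ∩ S).card * i)
        ≤ ∑ r ∈ Finset.range (s+1), ((s.choose r : ℝ) * (t : ℝ)^(s-r)) * p' ^ (2*k*s - r*i) := by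
      intro S hS
      have hScard : S.card = s := (Finset.mem_powersetCard.mp hS).2
      have := sum_comp_bound S s pc
        (fun T hT => (Finset.mem_powersetCard.mp hT).2) (Finset.range (s+1))
        (fun T _ => by
          rw [Finset.mem_range, Nat.lt_succ_iff, ← hScard]
          exact Finset.card_le_card Finset.inter_subset_right)
        (fun r => p' ^ (2*k*s - r*i)) (fun r => pow_nonneg hp0 _)
      refine this.trans (le_of_eq (Finset.sum_congr rfl fun r _ => ?_))
      rw [hScard, Fintype.card_fin]
    calc g i ≤ ∑ _S ∈ pc, ∑ r ∈ Finset.range (s+1),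
          ((s.choose r : ℝ) * (t : ℝ)^(s-r)) * p' ^ (2*k*s - r*i) :=
        Finset.sum_le_sum hper
      _ = (pc.card : ℝ) * ∑ r ∈ Finset.range (s+1),
          ((s.choose r : ℝ) * (t : ℝ)^(s-r)) * p' ^ (2*k*s - r*i) := by
        rw [Finset.sum_const, nsmul_eq_mul]
      _ ≤ ∑ r ∈ Finset.range (s+1),
          ((t : ℝ)^s * ((s.choose r : ℝ) * (t : ℝ)^(s-r))) * p' ^ (2*k*s - i*r) := by
        rw [Finset.mul_sum]
        refine Finset.sum_le_sum fun r _ => ?_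
        rw [mul_comm i r]
        have hcard : (pc.card : ℝ) ≤ (t : ℝ)^s := by
          rw [hpc, Finset.card_powersetCard, Finset.card_univ, Fintype.card_fin]
          exact_mod_cast Nat.choose_le_pow t s
        have h0 : (0:ℝ) ≤ ((s.choose r : ℝ) * (t : ℝ)^(s-r)) * p' ^ (2*k*s - r*i) :=
          mul_nonneg (by positivity) (pow_nonneg hp0 _)
        calc (pc.card : ℝ) * (((s.choose r : ℝ) * (t : ℝ)^(s-r)) * p' ^ (2*k*s - r*i))
            ≤ (t : ℝ)^s * (((s.choose r : ℝ) * (t : ℝ)^(s-r)) * p' ^ (2*k*s - r*i)) :=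
              mul_le_mul_of_nonneg_right hcard h0
          _ = ((t : ℝ)^s * ((s.choose r : ℝ) * (t : ℝ)^(s-r))) * p' ^ (2*k*s - r*i) := by ring
  -- step 2 : bound for fixed X
  have hstep2 : ∀ X ∈ pk, ∑ Y ∈ pk.filter (fun Y => Y ∩ X ≠ ∅ ∧ Y ≠ X), g ((Y ∩ X).card)
      ≤ ∑ i ∈ Finset.Icc 1 (k-1), ((k.choose i : ℝ) * (n : ℝ)^(k-i)) * g i := by
    intro X hX
    have hXcard : X.card = k := (Finset.mem_powersetCard.mp hX).2
    have := sum_comp_bound X k (pk.filter (fun Y => Y ∩ X ≠ ∅ ∧ Y ≠ X))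
      (fun Y hY => (Finset.mem_powersetCard.mp (Finset.mem_filter.mp hY).1).2)
      (Finset.Icc 1 (k-1))
      (fun Y hY => by
        rw [Finset.mem_filter] at hY
        have hYcard : Y.card = k := (Finset.mem_powersetCard.mp hY.1).2
        rw [Finset.mem_Icc]
        constructor
        · rw [Nat.one_le_iff_ne_zero]
          simp only [ne_eq, Finset.card_eq_zero]
          exact hY.2.1
        · by_contra h
          push_neg at h
          have hle : (Y ∩ X).card ≤ k := by
            rw [← hYcard]; exact Finset.card_le_card Finset.inter_subset_left
          have hik : (Y ∩ X).card = k := by omega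
          have h1 : Y ∩ X = Y :=
            Finset.eq_of_subset_of_card_le Finset.inter_subset_left (by omega)
          have h2 : Y ∩ X = X :=
            Finset.eq_of_subset_of_card_le Finset.inter_subset_right (by omega)
          exact hY.2.2 (h1 ▸ h2))
      g hg0
    refine this.trans (le_of_eq (Finset.sum_congr rfl fun i _ => ?_))
    rw [hXcard, Fintype.card_fin]
  -- assemble
  have hb2 : b2 μ A k s ≤ ∑ X ∈ pk, ∑ Y ∈ pk.filter (fun Y => Y ∩ X ≠ ∅ ∧ Y ≠ X),
      g ((Y ∩ X).card) := by
    refine Finset.sum_le_sum fun X hX => Finset.sum_le_sum fun Y hY => ?_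
    have hXcard : X.card = k := (Finset.mem_powersetCard.mp hX).2
    have hYcard : Y.card = k := (Finset.mem_powersetCard.mp (Finset.mem_filter.mp hY).1).2
    exact pXY_le_sum hindep hp0 hp1 hA k s X Y hXcard hYcard
  have hmid : b2 μ A k s ≤ (n : ℝ)^k *
      ∑ i ∈ Finset.Icc 1 (k-1), ((k.choose i : ℝ) * (n : ℝ)^(k-i)) * g i := by
    refine hb2.trans ?_
    calc ∑ X ∈ pk, ∑ Y ∈ pk.filter (fun Y => Y ∩ X ≠ ∅ ∧ Y ≠ X), g ((Y ∩ X).card)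
        ≤ ∑ _X ∈ pk, ∑ i ∈ Finset.Icc 1 (k-1), ((k.choose i : ℝ) * (n : ℝ)^(k-i)) * g i :=
          Finset.sum_le_sum hstep2
      _ = (pk.card : ℝ) * ∑ i ∈ Finset.Icc 1 (k-1), ((k.choose i : ℝ) * (n : ℝ)^(k-i)) * g i := by
          rw [Finset.sum_const, nsmul_eq_mul]
      _ ≤ (n : ℝ)^k * ∑ i ∈ Finset.Icc 1 (k-1), ((k.choose i : ℝ) * (n : ℝ)^(k-i)) * g i := by
          refine mul_le_mul_of_nonneg_right ?_ (Finset.sum_nonneg fun i _ =>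
            mul_nonneg (by positivity) (hg0 i))
          rw [hpk, Finset.card_powersetCard, Finset.card_univ, Fintype.card_fin]
          exact_mod_cast Nat.choose_le_pow n k
  refine hmid.trans ?_
  rw [Finset.mul_sum]
  refine Finset.sum_le_sum fun i _ => ?_
  calc (n : ℝ)^k * (((k.choose i : ℝ) * (n : ℝ)^(k-i)) * g i)
      ≤ (n : ℝ)^k * (((k.choose i : ℝ) * (n : ℝ)^(k-i)) *
        ∑ r ∈ Finset.range (s+1),
          ((t : ℝ)^s * ((s.choose r : ℝ) * (t : ℝ)^(s-r))) * p' ^ (2*k*s - i*r)) := by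
        refine mul_le_mul_of_nonneg_left (mul_le_mul_of_nonneg_left (hstep3 i) ?_) ?_
        · positivity
        · positivity
    _ = ∑ r ∈ Finset.range (s+1),
        ((n : ℝ)^k * ((k.choose i : ℝ) * (n : ℝ)^(k-i)))
          * ((t : ℝ)^s * ((s.choose r : ℝ) * (t : ℝ)^(s-r))) * p' ^ (2*k*s - i*r) := by
        rw [Finset.mul_sum, Finset.mul_sum]
        exact Finset.sum_congr rfl fun r _ => by ring

end Prob


lemma exponent_le' {k s i r : ℕ} (hk : 2 ≤ k) (hs : 2 ≤ s) (hi1 : 1 ≤ i) (hik : i ≤ k-1)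
    (hr : r ≤ s) {c : ℝ} (hc0 : 0 < c) (hcs : c * s ≤ ((k:ℝ)-1) * ((s:ℝ)-1)) :
    ((2*k-i : ℕ) : ℝ) + c * ((2*s-r : ℕ) : ℝ) - ((2*k*s-i*r : ℕ) : ℝ)
      ≤ 2*(k:ℝ)*(1-(s:ℝ)) + (s:ℝ)*((k:ℝ)-1+c) - (k:ℝ) + 1 := by
  have hir : i * r ≤ 2*k*s := by
    calc i * r ≤ k * s := Nat.mul_le_mul (Nat.le_trans hik (Nat.sub_le k 1)) hr
      _ ≤ 2*(k*s) := Nat.le_mul_of_pos_left _ (by norm_num)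
      _ = 2*k*s := (mul_assoc 2 k s).symm
  rw [Nat.cast_sub (by omega), Nat.cast_sub (by omega), Nat.cast_sub hir]
  push_cast
  have hkR : 2 ≤ (k:ℝ) := by exact_mod_cast hk
  have hsR : 2 ≤ (s:ℝ) := by exact_mod_cast hs
  have hiR : 1 ≤ (i:ℝ) := by exact_mod_cast hi1
  have hikR : (i:ℝ) ≤ (k:ℝ) - 1 := by
    have : (i:ℝ) ≤ ((k-1 : ℕ):ℝ) := by exact_mod_cast hik
    rw [Nat.cast_sub (by omega)] at this; exact_mod_cast this
  have hrR : (r:ℝ) ≤ (s:ℝ) := by exact_mod_cast hr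
  have hr0 : (0:ℝ) ≤ (r:ℝ) := Nat.cast_nonneg r
  have hA : 0 ≤ ((s:ℝ) - r) * ((i:ℝ) + ((s:ℝ)-1)*((k:ℝ)-1) - c*(s:ℝ)) := by
    refine mul_nonneg (by linarith) ?_
    nlinarith
  have hB : 0 ≤ (r:ℝ) * (((k:ℝ)-1-(i:ℝ)) * ((s:ℝ)-1)) :=
    mul_nonneg hr0 (mul_nonneg (by linarith) (by linarith))
  nlinarith [hA, hB]

lemma term_isBigO (k s i r : ℕ) (hk : 2 ≤ k) (hs : 2 ≤ s) (hi1 : 1 ≤ i) (hik : i ≤ k-1)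
    (hr : r ≤ s) {c γ C : ℝ} (hγ : 0 < γ) (hC : 0 < C) (hc0 : 0 < c)
    (hcs : c * s ≤ ((k:ℝ)-1) * ((s:ℝ)-1)) (t : ℕ → ℕ)
    (ht : ∀ᶠ n : ℕ in atTop, (t n : ℝ) ≤ C * (n:ℝ) ^ c) :
    (fun n : ℕ => ((n:ℝ)^k * ((k.choose i : ℝ) * (n:ℝ)^(k-i)))
        * (((t n):ℝ)^s * ((s.choose r : ℝ) * ((t n):ℝ)^(s-r))) * (γ/(n:ℝ)) ^ (2*k*s - i*r))
      =O[atTop] fun n : ℕ => (n:ℝ) ^ (2*(k:ℝ)*(1-(s:ℝ)) + (s:ℝ)*((k:ℝ)-1+c) - (k:ℝ) + 1) := by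
  set α : ℝ := 2*(k:ℝ)*(1-(s:ℝ)) + (s:ℝ)*((k:ℝ)-1+c) - (k:ℝ) + 1 with hα
  set E : ℕ := 2*k*s - i*r with hE
  set K : ℝ := (k.choose i : ℝ) * (s.choose r : ℝ) * C^(2*s-r) * γ^E with hK
  refine IsBigO.of_bound K ?_
  filter_upwards [ht, eventually_ge_atTop 1] with n htn hn1
  have hx0 : (0:ℝ) < (n:ℝ) := by exact_mod_cast hn1
  have hx1 : (1:ℝ) ≤ (n:ℝ) := by exact_mod_cast hn1
  have ht0 : (0:ℝ) ≤ (t n : ℝ) := Nat.cast_nonneg _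
  have hterm_eq : ((n:ℝ)^k * ((k.choose i : ℝ) * (n:ℝ)^(k-i)))
        * (((t n):ℝ)^s * ((s.choose r : ℝ) * ((t n):ℝ)^(s-r))) * (γ/(n:ℝ)) ^ E
      = ((k.choose i : ℝ) * (s.choose r : ℝ)) * (n:ℝ)^(2*k-i)
        * ((t n:ℝ))^(2*s-r) * (γ/(n:ℝ))^E := by
    rw [show 2*k-i = k + (k-i) by omega, show 2*s-r = s + (s-r) by omega,
      pow_add, pow_add]
    ring
  have hnonneg : 0 ≤ ((n:ℝ)^k * ((k.choose i : ℝ) * (n:ℝ)^(k-i)))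
        * (((t n):ℝ)^s * ((s.choose r : ℝ) * ((t n):ℝ)^(s-r))) * (γ/(n:ℝ)) ^ E :=
    mul_nonneg (mul_nonneg (by positivity) (by positivity)) (by positivity)
  rw [Real.norm_eq_abs, Real.norm_eq_abs, abs_of_nonneg hnonneg,
    abs_of_nonneg (Real.rpow_nonneg hx0.le _)]
  have hbound1 : ((t n:ℝ))^(2*s-r) ≤ (C * (n:ℝ)^c)^(2*s-r) :=
    pow_le_pow_left₀ ht0 htn _
  have hCx : (C * (n:ℝ)^c)^(2*s-r) = C^(2*s-r) * ((n:ℝ)^c)^((2*s-r : ℕ) : ℝ) := by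
    rw [mul_pow, Real.rpow_natCast]
  have hrpow : (n:ℝ)^(2*k-i) * (((n:ℝ)^c)^((2*s-r:ℕ):ℝ)) * (γ/(n:ℝ))^E
      = γ^E * (n:ℝ) ^ (((2*k-i:ℕ):ℝ) + c*((2*s-r:ℕ):ℝ) - ((E:ℕ):ℝ)) := by
    rw [div_pow, ← Real.rpow_natCast (n:ℝ) (2*k-i), ← Real.rpow_natCast (n:ℝ) E,
      ← Real.rpow_mul hx0.le, Real.rpow_sub hx0, Real.rpow_add hx0]
    ring
  have hexp : ((2*k-i:ℕ):ℝ) + c*((2*s-r:ℕ):ℝ) - ((E:ℕ):ℝ) ≤ α :=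
    exponent_le' hk hs hi1 hik hr hc0 hcs
  calc ((n:ℝ)^k * ((k.choose i : ℝ) * (n:ℝ)^(k-i)))
        * (((t n):ℝ)^s * ((s.choose r : ℝ) * ((t n):ℝ)^(s-r))) * (γ/(n:ℝ)) ^ E
      = ((k.choose i : ℝ) * (s.choose r : ℝ)) * (n:ℝ)^(2*k-i)
        * ((t n:ℝ))^(2*s-r) * (γ/(n:ℝ))^E := hterm_eq
    _ ≤ ((k.choose i : ℝ) * (s.choose r : ℝ)) * (n:ℝ)^(2*k-i)
        * (C * (n:ℝ)^c)^(2*s-r) * (γ/(n:ℝ))^E := by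
        refine mul_le_mul_of_nonneg_right (mul_le_mul_of_nonneg_left hbound1 ?_) (by positivity)
        positivity
    _ = K * ((n:ℝ)^(2*k-i) * (((n:ℝ)^c)^((2*s-r:ℕ):ℝ)) * (γ/(n:ℝ))^E) / γ^E := by
        rw [hCx, hK]
        field_simp
    _ = K * (n:ℝ) ^ (((2*k-i:ℕ):ℝ) + c*((2*s-r:ℕ):ℝ) - ((E:ℕ):ℝ)) := by
        rw [hrpow]
        field_simp
    _ ≤ K * (n:ℝ) ^ α := by
        refine mul_le_mul_of_nonneg_left (Real.rpow_le_rpow_of_exponent_le hx1 hexp) ?_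
        rw [hK]; positivity

/-- **Asymptotics for `b₂(s)` in the fixed-`p` model.**
Fix `k, s ≥ 2`, `γ > 0` and `0 < c ≤ (k−1)(1−1/s)`; consider for each `n` the random dataset
model with common item probability `p = γ/n` and `t(n) = Θ(n^c)` transactions. Then, as
`n → ∞`, `b₂(s) = O(n^{2k(1−s) + s(k−1+c) − k + 1})`. -/
theorem b2_isBigO_fixed_p
    {k s : ℕ} (hk : 2 ≤ k) (hs : 2 ≤ s)
    (γ : ℝ) (hγ : 0 < γ)
    (c : ℝ) (hc0 : 0 < c) (hc : c ≤ ((k : ℝ) - 1) * (1 - 1 / (s : ℝ)))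
    {Ω : ℕ → Type*} [∀ n, MeasurableSpace (Ω n)]
    (μ : ∀ n, Measure (Ω n)) [∀ n, IsProbabilityMeasure (μ n)]
    (t : ℕ → ℕ)
    (htΘ : (fun n => (t n : ℝ)) =Θ[atTop] fun n => (n : ℝ) ^ c)
    (A : ∀ n, Fin (t n) → Fin n → Ω n → Bool)
    (hmeas : ∀ n j i, Measurable (A n j i))
    (hindep : ∀ n, iIndepFun
      (fun p : Fin (t n) × Fin n => A n p.1 p.2) (μ n))
    (hfreq : ∀ n : ℕ, γ ≤ n → ∀ j i,
      μ n {ω | A n j i ω = true} = ENNReal.ofReal (γ / n)) :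
    (fun n => b2 (μ n) (A n) k s)
      =O[atTop] fun n =>
        (n : ℝ) ^ (2 * (k : ℝ) * (1 - (s : ℝ)) + (s : ℝ) * ((k : ℝ) - 1 + c)
          - (k : ℝ) + 1) := by

  classical
  set α : ℝ := 2 * (k : ℝ) * (1 - (s : ℝ)) + (s : ℝ) * ((k : ℝ) - 1 + c) - (k : ℝ) + 1 with hα
  have hsR : (2:ℝ) ≤ (s:ℝ) := by exact_mod_cast hs
  have hs0 : (0:ℝ) < (s:ℝ) := by linarith
  have hcs : c * (s:ℝ) ≤ ((k:ℝ)-1) * ((s:ℝ)-1) := by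
    have h := mul_le_mul_of_nonneg_right hc hs0.le
    calc c * (s:ℝ) ≤ ((k:ℝ)-1) * (1 - 1/(s:ℝ)) * (s:ℝ) := h
      _ = ((k:ℝ)-1) * ((s:ℝ)-1) := by field_simp
  -- bound on t
  obtain ⟨C0, hC0⟩ := htΘ.isBigO.bound
  set C : ℝ := max C0 1 with hC
  have hCpos : 0 < C := lt_of_lt_of_le one_pos (le_max_right _ _)
  have htC : ∀ᶠ n : ℕ in atTop, (t n : ℝ) ≤ C * (n:ℝ) ^ c := by
    filter_upwards [hC0] with n hn
    have h1 : ‖(t n : ℝ)‖ = (t n : ℝ) := Real.norm_of_nonneg (Nat.cast_nonneg _)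
    have h2 : ‖(n:ℝ) ^ c‖ = (n:ℝ) ^ c := Real.norm_of_nonneg (Real.rpow_nonneg (Nat.cast_nonneg _) _)
    rw [h1, h2] at hn
    refine hn.trans (mul_le_mul_of_nonneg_right (le_max_left _ _)
      (Real.rpow_nonneg (Nat.cast_nonneg _) _))
  -- the dominating function
  set F : ℕ → ℝ := fun n => ∑ i ∈ Finset.Icc 1 (k-1), ∑ r ∈ Finset.range (s+1),
    ((n : ℝ)^k * ((k.choose i : ℝ) * (n : ℝ)^(k-i)))
      * (((t n) : ℝ)^s * ((s.choose r : ℝ) * ((t n) : ℝ)^(s-r)))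
      * (γ/(n:ℝ)) ^ (2*k*s - i*r) with hF
  have hγn : ∀ᶠ n : ℕ in atTop, γ ≤ (n:ℝ) := by
    filter_upwards [eventually_ge_atTop ⌈γ⌉₊] with n hn
    exact le_trans (Nat.le_ceil γ) (by exact_mod_cast hn)
  have hbF : ∀ᶠ n : ℕ in atTop, b2 (μ n) (A n) k s ≤ F n := by
    filter_upwards [hγn, eventually_ge_atTop 1] with n hγle hn1
    have hn0 : (0:ℝ) < (n:ℝ) := by exact_mod_cast hn1
    have hp0 : 0 ≤ γ / (n:ℝ) := div_nonneg hγ.le hn0.le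
    have hp1 : γ / (n:ℝ) ≤ 1 := (div_le_one hn0).mpr hγle
    exact b2_le_master (hindep n) hp0 hp1 (hfreq n hγle) k s (by omega)
  have hFO : F =O[atTop] fun n : ℕ => (n:ℝ) ^ α := by
    refine IsBigO.fun_sum fun i hi => ?_
    refine IsBigO.fun_sum fun r hr => ?_
    rw [Finset.mem_Icc] at hi
    rw [Finset.mem_range, Nat.lt_succ_iff] at hr
    exact term_isBigO k s i r hk hs hi.1 hi.2 hr hγ hCpos hc0 hcs t htC
  have hb2nn : ∀ n, 0 ≤ b2 (μ n) (A n) k s := fun n =>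
    Finset.sum_nonneg fun X _ => Finset.sum_nonneg fun Y _ => ENNReal.toReal_nonneg
  have hb2F : (fun n => b2 (μ n) (A n) k s) =O[atTop] F := by
    refine IsBigO.of_bound 1 ?_
    filter_upwards [hbF] with n hn
    rw [one_mul, Real.norm_eq_abs, Real.norm_eq_abs, abs_of_nonneg (hb2nn n)]
    exact hn.trans (le_abs_self _)
  exact hb2F.trans hFO


end PaperModel
end
end

section
/- In the mixed random dataset model, let X ≠ Y be k-element itemsets with X ∩ Y ≠ ∅ and let 1 ≤ s ≤ t. Then almost surely E[Z_X Z_Y | R_1,…,R_n] ≤ Σ_{i=0}^{s} C(t,i)·C(t−i,s−i)·C(t−s,s−i) · (∏_{x ∈ X∩Y} R_x^{2s−i}) · (∏_{x ∈ X∖Y} R_x^s) · (∏_{y ∈ Y∖X} R_y^s). -/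
open MeasureTheory ProbabilityTheory Finset Filter Asymptotics

noncomputable section

namespace PaperModel

variable {Ω : Type*}

/-- `m`-th moment `E[R^m]` of a distribution `ρ` on `ℝ`. -/
def moment (ρ : Measure ℝ) (m : ℕ) : ℝ := ∫ x, x ^ m ∂ρ

/-- The σ-algebra generated by the random frequencies `R_1, …, R_n`. -/
def sigmaR [MeasurableSpace Ω] {n : ℕ} (R : Fin n → Ω → ℝ) : MeasurableSpace Ω :=
  MeasurableSpace.comap (fun ω (i : Fin n) => R i ω) inferInstance

/-- **The mixed random dataset model**: `R_1, …, R_n` are i.i.d. with distribution `ρ`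
(taking values in `[0,1]`), and, conditioned on `(R_1, …, R_n)`, the entries `A j i` are
conditionally independent Bernoulli random variables with `Pr(A j i = 1 | R) = R i`.
The last clause expresses this conditional structure by giving the joint law of
`(R_1, …, R_n)` and any outcome pattern `b` of the table `A`. -/
def MixedModel [MeasurableSpace Ω] (μ : Measure Ω) {n t : ℕ}
    (R : Fin n → Ω → ℝ) (A : Fin t → Fin n → Ω → Bool) (ρ : Measure ℝ) : Prop :=
  (∀ i, Measurable (R i)) ∧
  (∀ j i, Measurable (A j i)) ∧
  (∀ i ω, R i ω ∈ Set.Icc (0 : ℝ) 1) ∧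
  iIndepFun R μ ∧
  (∀ i, μ.map (R i) = ρ) ∧
  (∀ b : Fin t → Fin n → Bool, ∀ B : Set (Fin n → ℝ), MeasurableSet B →
    μ ({ω | (fun i => R i ω) ∈ B} ∩ {ω | ∀ j i, A j i ω = b j i})
      = ∫⁻ ω in {ω | (fun i => R i ω) ∈ B},
          ∏ j, ∏ i, ENNReal.ofReal (if b j i then R i ω else 1 - R i ω) ∂μ)
/-- Support of a fixed boolean table. -/
def suppB {n t : ℕ} (b : Fin t → Fin n → Bool) (X : Finset (Fin n)) : ℕ :=
  (Finset.univ.filter fun j => ∀ i ∈ X, b j i = true).card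

/-- Factorization of the Bernoulli-pattern sum over a required set of cells. -/
lemma sum_pattern {t n : ℕ} (r : Fin n → ℝ) (P : Finset (Fin t × Fin n)) :
    ∑ b : Fin t → Fin n → Bool,
      (if ∀ p ∈ P, b p.1 p.2 = true then (1:ℝ) else 0)
        * ∏ j, ∏ i, (if b j i then r i else 1 - r i)
    = ∏ p ∈ P, r p.2 := by
  classical
  rw [← Fintype.sum_equiv (Equiv.curry (Fin t) (Fin n) Bool)
      (fun c => (if ∀ p ∈ P, c p = true then (1:ℝ) else 0)
        * ∏ p : Fin t × Fin n, (if c p then r p.2 else 1 - r p.2))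
      (fun b => (if ∀ p ∈ P, b p.1 p.2 = true then (1:ℝ) else 0)
        * ∏ j, ∏ i, (if b j i then r i else 1 - r i))
      (fun c => by
        rw [Fintype.prod_prod_type
          (fun p : Fin t × Fin n => if c p then r p.2 else 1 - r p.2)]
        rfl)]
  have key : ∀ c : Fin t × Fin n → Bool,
      (if ∀ p ∈ P, c p = true then (1:ℝ) else 0)
        * ∏ p : Fin t × Fin n, (if c p then r p.2 else 1 - r p.2)
      = ∏ p : Fin t × Fin n,
          ((if p ∈ P then (if c p then (1:ℝ) else 0) else 1)
            * (if c p then r p.2 else 1 - r p.2)) := by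
    intro c
    rw [prod_mul_distrib]
    congr 1
    rw [Finset.prod_ite_mem univ P (fun p => if c p then (1:ℝ) else 0), univ_inter]
    by_cases h : ∀ p ∈ P, c p = true
    · rw [if_pos h]
      exact (Finset.prod_eq_one fun p hp => by rw [if_pos (h p hp)]).symm
    · push_neg at h
      obtain ⟨p, hp, hcp⟩ := h
      rw [if_neg (by push_neg; exact ⟨p, hp, hcp⟩)]
      exact (Finset.prod_eq_zero hp (by rw [if_neg hcp])).symm
  simp_rw [key]
  have h2 := Finset.prod_univ_sum (fun _ : Fin t × Fin n => (univ : Finset Bool))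
    (fun p x => (if p ∈ P then (if x then (1:ℝ) else 0) else 1)
      * (if x then r p.2 else 1 - r p.2))
  rw [Fintype.piFinset_univ] at h2
  rw [← h2]
  have h3 : ∀ p : Fin t × Fin n,
      (∑ x : Bool, (if p ∈ P then (if x then (1:ℝ) else 0) else 1)
        * (if x then r p.2 else 1 - r p.2)) = if p ∈ P then r p.2 else 1 := by
    intro p
    rw [Fintype.sum_bool]
    by_cases h : p ∈ P <;> simp [h]
  simp_rw [h3]
  rw [Finset.prod_ite_mem univ P (fun p => r p.2), univ_inter]

/-- Counting pairs of `s`-subsets with intersection of size `i`. -/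
lemma count_pairs {t : ℕ} (s i : ℕ) (hi : i ≤ s) (hst : s ≤ t) :
    ((((univ : Finset (Fin t)).powersetCard s) ×ˢ ((univ : Finset (Fin t)).powersetCard s)).filter
      (fun p => (p.1 ∩ p.2).card = i)).card
    ≤ t.choose i * ((t - i).choose (s - i) * (t - s).choose (s - i)) := by
  classical
  set D : Finset (Σ _ : Finset (Fin t), Σ _ : Finset (Fin t), Finset (Fin t)) :=
    ((univ : Finset (Fin t)).powersetCard i).sigma
      (fun I => (Iᶜ.powersetCard (s - i)).sigma
        (fun U => ((I ∪ U)ᶜ).powersetCard (s - i))) with hD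
  have hcard : D.card = t.choose i * ((t - i).choose (s - i) * (t - s).choose (s - i)) := by
    rw [hD, Finset.card_sigma]
    have h1 : ∀ I ∈ (univ : Finset (Fin t)).powersetCard i,
        ((Iᶜ.powersetCard (s - i)).sigma (fun U => ((I ∪ U)ᶜ).powersetCard (s - i))).card
        = (t - i).choose (s - i) * (t - s).choose (s - i) := by
      intro I hI
      rw [Finset.mem_powersetCard] at hI
      rw [Finset.card_sigma]
      have h2 : ∀ U ∈ Iᶜ.powersetCard (s - i),
          (((I ∪ U)ᶜ).powersetCard (s - i)).card = (t - s).choose (s - i) := by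
        intro U hU
        rw [Finset.mem_powersetCard] at hU
        rw [Finset.card_powersetCard, Finset.card_compl, Fintype.card_fin,
          Finset.card_union_of_disjoint, hI.2, hU.2]
        · congr 1; omega
        · rw [Finset.disjoint_left]
          intro a ha haU
          exact (Finset.mem_compl.mp (hU.1 haU)) ha
      rw [Finset.sum_congr rfl h2, Finset.sum_const, Finset.card_powersetCard,
        Finset.card_compl, Fintype.card_fin, hI.2, smul_eq_mul]
    rw [Finset.sum_congr rfl h1, Finset.sum_const, Finset.card_powersetCard,
      Finset.card_univ, Fintype.card_fin, smul_eq_mul]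
  rw [← hcard]
  apply Finset.card_le_card_of_injOn
    (fun p => ⟨p.1 ∩ p.2, ⟨p.1 \ p.2, p.2 \ p.1⟩⟩)
  · intro p hp
    rw [Finset.mem_coe, Finset.mem_filter, Finset.mem_product, Finset.mem_powersetCard,
      Finset.mem_powersetCard] at hp
    obtain ⟨⟨⟨_, hS⟩, ⟨_, hT⟩⟩, hi'⟩ := hp
    have c1 := Finset.card_sdiff_add_card_inter p.1 p.2
    have c2 := Finset.card_sdiff_add_card_inter p.2 p.1
    rw [Finset.inter_comm] at c2
    simp only [hD, Finset.mem_coe, Finset.mem_sigma]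
    refine ⟨?_, ?_, ?_⟩
    · rw [Finset.mem_powersetCard]; exact ⟨Finset.subset_univ _, hi'⟩
    · rw [Finset.mem_powersetCard]
      constructor
      · intro a ha
        rw [Finset.mem_compl]
        rw [Finset.mem_sdiff] at ha
        rw [Finset.mem_inter]
        tauto
      · omega
    · rw [Finset.mem_powersetCard]
      constructor
      · intro a ha
        rw [Finset.mem_compl]
        rw [Finset.mem_sdiff] at ha
        rw [Finset.mem_union, Finset.mem_inter, Finset.mem_sdiff]
        tauto
      · omega
  · intro p _ q _ h
    simp only [Sigma.mk.inj_iff, heq_eq_eq] at h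
    obtain ⟨h1, h2, h3⟩ := h
    have hS : p.1 = q.1 := by
      rw [← Finset.sdiff_union_inter p.1 p.2, ← Finset.sdiff_union_inter q.1 q.2, h1, h2]
    have hT : p.2 = q.2 := by
      rw [← Finset.sdiff_union_inter p.2 p.1, ← Finset.sdiff_union_inter q.2 q.1, h3,
        Finset.inter_comm, h1, Finset.inter_comm]
    exact Prod.ext hS hT


lemma pointwise_bound {t n : ℕ} (s : ℕ) (r : Fin n → ℝ)
    (hr0 : ∀ i, 0 ≤ r i) (hr1 : ∀ i, r i ≤ 1) (hst : s ≤ t)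
    (X Y : Finset (Fin n)) :
    ∑ b : Fin t → Fin n → Bool,
      ((if s ≤ suppB b X then (1:ℝ) else 0) * (if s ≤ suppB b Y then 1 else 0))
        * ∏ j, ∏ i, (if b j i then r i else 1 - r i)
    ≤ ∑ i ∈ Finset.range (s + 1),
        (t.choose i : ℝ) * ((t - i).choose (s - i) : ℝ) * ((t - s).choose (s - i) : ℝ)
          * (∏ x ∈ X ∩ Y, r x ^ (2 * s - i))
          * (∏ x ∈ X \ Y, r x ^ s)
          * (∏ y ∈ Y \ X, r y ^ s) := by
  classical
  set PC := (univ : Finset (Fin t)).powersetCard s with hPC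
  set A := ∏ x ∈ X ∩ Y, r x with hA
  set B := ∏ x ∈ X \ Y, r x with hB
  set C := ∏ x ∈ Y \ X, r x with hC
  have hA0 : 0 ≤ A := Finset.prod_nonneg fun x _ => hr0 x
  have hB0 : 0 ≤ B := Finset.prod_nonneg fun x _ => hr0 x
  have hC0 : 0 ≤ C := Finset.prod_nonneg fun x _ => hr0 x
  have hw : ∀ b : Fin t → Fin n → Bool,
      0 ≤ ∏ j, ∏ i, (if b j i then r i else 1 - r i) := by
    intro b
    refine Finset.prod_nonneg fun j _ => Finset.prod_nonneg fun i _ => ?_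
    split
    · exact hr0 i
    · linarith [hr1 i]
  -- step 1 : union bound over witnessing pairs (S, T)
  have step1 : ∑ b : Fin t → Fin n → Bool,
      ((if s ≤ suppB b X then (1:ℝ) else 0) * (if s ≤ suppB b Y then 1 else 0))
        * ∏ j, ∏ i, (if b j i then r i else 1 - r i)
      ≤ ∑ b : Fin t → Fin n → Bool,
          (∑ q ∈ PC ×ˢ PC,
            if ∀ p ∈ q.1 ×ˢ X ∪ q.2 ×ˢ Y, b p.1 p.2 = true then (1:ℝ) else 0)
            * ∏ j, ∏ i, (if b j i then r i else 1 - r i) := by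
    apply Finset.sum_le_sum
    intro b _
    apply mul_le_mul_of_nonneg_right _ (hw b)
    have hnn : ∀ q ∈ PC ×ˢ PC,
        0 ≤ (if ∀ p ∈ q.1 ×ˢ X ∪ q.2 ×ˢ Y, b p.1 p.2 = true then (1:ℝ) else 0) := by
      intro q _; split <;> norm_num
    by_cases hX' : s ≤ suppB b X
    · by_cases hY' : s ≤ suppB b Y
      · rw [if_pos hX', if_pos hY', one_mul]
        obtain ⟨S, hSsub, hScard⟩ := Finset.exists_subset_card_eq hX'
        obtain ⟨T, hTsub, hTcard⟩ := Finset.exists_subset_card_eq hY'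
        have hq : (S, T) ∈ PC ×ˢ PC := by
          rw [Finset.mem_product, hPC, Finset.mem_powersetCard, Finset.mem_powersetCard]
          exact ⟨⟨Finset.subset_univ _, hScard⟩, Finset.subset_univ _, hTcard⟩
        have h1 : (if ∀ p ∈ S ×ˢ X ∪ T ×ˢ Y, b p.1 p.2 = true then (1:ℝ) else 0) = 1 := by
          rw [if_pos]
          intro p hp
          rcases Finset.mem_union.mp hp with h | h
          · rw [Finset.mem_product] at h
            exact (Finset.mem_filter.mp (hSsub h.1)).2 p.2 h.2
          · rw [Finset.mem_product] at h
            exact (Finset.mem_filter.mp (hTsub h.1)).2 p.2 h.2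
        calc (1:ℝ) = _ := h1.symm
          _ ≤ _ := Finset.single_le_sum hnn hq
      · rw [if_neg hY', mul_zero]
        exact Finset.sum_nonneg hnn
    · rw [if_neg hX', zero_mul]
      exact Finset.sum_nonneg hnn
  -- step 2 : exchange sums and evaluate the inner Bernoulli sum
  have step2 : ∑ b : Fin t → Fin n → Bool,
      (∑ q ∈ PC ×ˢ PC,
        if ∀ p ∈ q.1 ×ˢ X ∪ q.2 ×ˢ Y, b p.1 p.2 = true then (1:ℝ) else 0)
        * ∏ j, ∏ i, (if b j i then r i else 1 - r i)
      = ∑ q ∈ PC ×ˢ PC, ∏ p ∈ q.1 ×ˢ X ∪ q.2 ×ˢ Y, r p.2 := by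
    simp_rw [Finset.sum_mul]
    rw [Finset.sum_comm]
    exact Finset.sum_congr rfl fun q _ => sum_pattern r _
  -- step 3 : evaluate each product
  have key3 : ∀ S T : Finset (Fin t), S.card = s → T.card = s →
      ∏ p ∈ S ×ˢ X ∪ T ×ˢ Y, r p.2
      = A ^ (2 * s - (S ∩ T).card) * B ^ s * C ^ s := by
    intro S T hS hT
    have hit : (S ∩ T).card ≤ s := hS ▸ Finset.card_le_card Finset.inter_subset_left
    have hsplit : S ×ˢ X ∪ T ×ˢ Y
        = ((S ∩ T) ×ˢ (X ∪ Y)) ∪ (((S \ T) ×ˢ X) ∪ ((T \ S) ×ˢ Y)) := by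
      ext ⟨j, x⟩
      simp only [Finset.mem_union, Finset.mem_product, Finset.mem_inter, Finset.mem_sdiff]
      tauto
    have d1 : Disjoint ((S ∩ T) ×ˢ (X ∪ Y)) (((S \ T) ×ˢ X) ∪ ((T \ S) ×ˢ Y)) := by
      simp only [Finset.disjoint_left, Finset.mem_union, Finset.mem_product,
        Finset.mem_inter, Finset.mem_sdiff]
      rintro ⟨j, x⟩ h1 h2
      tauto
    have d2 : Disjoint ((S \ T) ×ˢ X) ((T \ S) ×ˢ Y) := by
      simp only [Finset.disjoint_left, Finset.mem_product, Finset.mem_sdiff]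
      rintro ⟨j, x⟩ h1 h2
      tauto
    have hp : ∀ (A' : Finset (Fin t)) (B' : Finset (Fin n)),
        ∏ p ∈ A' ×ˢ B', r p.2 = (∏ x ∈ B', r x) ^ A'.card := by
      intro A' B'
      calc ∏ p ∈ A' ×ˢ B', r p.2 = ∏ _x ∈ A', ∏ y ∈ B', r y := by rw [Finset.prod_product]
        _ = ∏ _x ∈ A', (∏ y ∈ B', r y) := rfl
        _ = (∏ y ∈ B', r y) ^ A'.card := Finset.prod_const _
    rw [hsplit, Finset.prod_union d1, Finset.prod_union d2, hp, hp, hp]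
    have hSd : (S \ T).card = s - (S ∩ T).card := by
      have := Finset.card_sdiff_add_card_inter S T; omega
    have hTd : (T \ S).card = s - (S ∩ T).card := by
      have := Finset.card_sdiff_add_card_inter T S
      rw [Finset.inter_comm] at this; omega
    have hXY : ∏ x ∈ X ∪ Y, r x = A * B * C := by
      rw [Finset.union_eq_sdiff_union_sdiff_union_inter, Finset.prod_union, Finset.prod_union]
      · rw [hA, hB, hC]; ring
      · rw [Finset.disjoint_left]
        intro a ha hb
        rw [Finset.mem_sdiff] at ha hb
        tauto
      · refine Finset.disjoint_union_left.mpr ⟨Finset.disjoint_sdiff_inter X Y, ?_⟩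
        rw [Finset.inter_comm]
        exact Finset.disjoint_sdiff_inter Y X
    have hXp : ∏ x ∈ X, r x = A * B := by
      rw [hA, hB, ← Finset.prod_union (Finset.disjoint_sdiff_inter X Y).symm,
        Finset.union_comm, Finset.sdiff_union_inter]
    have hYp : ∏ x ∈ Y, r x = A * C := by
      rw [hA, hC, Finset.inter_comm, ← Finset.prod_union (Finset.disjoint_sdiff_inter Y X).symm,
        Finset.union_comm, Finset.sdiff_union_inter]
    rw [hXY, hXp, hYp, hSd, hTd]
    set i := (S ∩ T).card
    have ha : A ^ (2 * s - i) = A ^ i * A ^ (s - i) * A ^ (s - i) := by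
      rw [← pow_add, ← pow_add]; congr 1; omega
    have hb : B ^ s = B ^ i * B ^ (s - i) := by
      rw [← pow_add]; congr 1; omega
    have hc : C ^ s = C ^ i * C ^ (s - i) := by
      rw [← pow_add]; congr 1; omega
    rw [ha, hb, hc]
    ring
  -- step 4 : regroup by intersection size and count
  have step4 : ∑ q ∈ PC ×ˢ PC, ∏ p ∈ q.1 ×ˢ X ∪ q.2 ×ˢ Y, r p.2
      ≤ ∑ i ∈ Finset.range (s + 1),
        (t.choose i : ℝ) * ((t - i).choose (s - i) : ℝ) * ((t - s).choose (s - i) : ℝ)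
          * (A ^ (2 * s - i) * B ^ s * C ^ s) := by
    have hmem : ∀ q ∈ PC ×ˢ PC, q.1.card = s ∧ q.2.card = s := by
      intro q hq
      rw [Finset.mem_product, hPC, Finset.mem_powersetCard, Finset.mem_powersetCard] at hq
      exact ⟨hq.1.2, hq.2.2⟩
    have hre : ∑ q ∈ PC ×ˢ PC, ∏ p ∈ q.1 ×ˢ X ∪ q.2 ×ˢ Y, r p.2
        = ∑ q ∈ PC ×ˢ PC, A ^ (2 * s - (q.1 ∩ q.2).card) * B ^ s * C ^ s :=
      Finset.sum_congr rfl fun q hq => key3 q.1 q.2 (hmem q hq).1 (hmem q hq).2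
    rw [hre]
    have hmaps : ∀ q ∈ PC ×ˢ PC, (q.1 ∩ q.2).card ∈ Finset.range (s + 1) := by
      intro q hq
      rw [Finset.mem_range]
      have h := Finset.card_le_card (Finset.inter_subset_left : q.1 ∩ q.2 ⊆ q.1)
      have := (hmem q hq).1
      omega
    rw [← Finset.sum_fiberwise_of_maps_to hmaps
      (fun q => A ^ (2 * s - (q.1 ∩ q.2).card) * B ^ s * C ^ s)]
    apply Finset.sum_le_sum
    intro i hi
    rw [Finset.mem_range] at hi
    have hcongr : ∑ q ∈ (PC ×ˢ PC).filter (fun q => (q.1 ∩ q.2).card = i),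
        A ^ (2 * s - (q.1 ∩ q.2).card) * B ^ s * C ^ s
        = ∑ _q ∈ (PC ×ˢ PC).filter (fun q => (q.1 ∩ q.2).card = i),
            A ^ (2 * s - i) * B ^ s * C ^ s :=
      Finset.sum_congr rfl fun q hq => by rw [(Finset.mem_filter.mp hq).2]
    rw [hcongr, Finset.sum_const, nsmul_eq_mul]
    have hcount := count_pairs (t := t) s i (by omega) hst
    have hFnn : 0 ≤ A ^ (2 * s - i) * B ^ s * C ^ s := by positivity
    calc (((PC ×ˢ PC).filter (fun q => (q.1 ∩ q.2).card = i)).card : ℝ)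
          * (A ^ (2 * s - i) * B ^ s * C ^ s)
        ≤ ((t.choose i * ((t - i).choose (s - i) * (t - s).choose (s - i)) : ℕ) : ℝ)
          * (A ^ (2 * s - i) * B ^ s * C ^ s) := by
          apply mul_le_mul_of_nonneg_right _ hFnn
          exact_mod_cast hcount
      _ = (t.choose i : ℝ) * ((t - i).choose (s - i) : ℝ) * ((t - s).choose (s - i) : ℝ)
          * (A ^ (2 * s - i) * B ^ s * C ^ s) := by push_cast; ring
  calc _ ≤ _ := step1
    _ = _ := step2
    _ ≤ _ := step4
    _ = _ := Finset.sum_congr rfl fun i _ => by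
        rw [hA, hB, hC, ← Finset.prod_pow, ← Finset.prod_pow, ← Finset.prod_pow]
        ring

/-- **Conditional bound on `E[Z_X Z_Y | R]` in the mixed model.**
Let `X ≠ Y` be `k`-element itemsets with `X ∩ Y ≠ ∅` and `1 ≤ s ≤ t`. Then almost surely
`E[Z_X Z_Y | R_1,…,R_n] ≤ Σ_{i=0}^{s} C(t,i)·C(t−i,s−i)·C(t−s,s−i)
  · (∏_{x ∈ X∩Y} R_x^{2s−i}) · (∏_{x ∈ X∖Y} R_x^s) · (∏_{y ∈ Y∖X} R_y^s)`. -/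
theorem condEZXZY_bound_mixed
    {Ω : Type*} [MeasurableSpace Ω] (μ : Measure Ω) [IsProbabilityMeasure μ]
    {n t : ℕ} (R : Fin n → Ω → ℝ) (A : Fin t → Fin n → Ω → Bool)
    (ρ : Measure ℝ) [IsProbabilityMeasure ρ]
    (hM : MixedModel μ R A ρ)
    (k s : ℕ) (hk : 1 ≤ k) (hs : 1 ≤ s) (hst : s ≤ t)
    (X Y : Finset (Fin n)) (hX : X.card = k) (hY : Y.card = k) (hne : X ≠ Y)
    (hXY : X ∩ Y ≠ ∅) :
    ∀ᵐ ω ∂μ,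
      (μ[fun ω' => Z A s X ω' * Z A s Y ω' | sigmaR R]) ω
        ≤ ∑ i ∈ Finset.range (s + 1),
            (t.choose i : ℝ) * ((t - i).choose (s - i) : ℝ) * ((t - s).choose (s - i) : ℝ)
              * (∏ x ∈ X ∩ Y, R x ω ^ (2 * s - i))
              * (∏ x ∈ X \ Y, R x ω ^ s)
              * (∏ y ∈ Y \ X, R y ω ^ s) := by
  classical
  obtain ⟨hRmeas, hAmeas, hR01, hindep, hmap, hjoint⟩ := hM
  have hπ : Measurable (fun ω (i : Fin n) => R i ω) :=
    measurable_pi_lambda _ hRmeas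
  have hm : sigmaR R ≤ ‹MeasurableSpace Ω› := hπ.comap_le
  haveI : SigmaFinite (μ.trim hm) := inferInstance
  set φ : (Fin t → Fin n → Bool) → ℝ := fun b =>
    (if s ≤ suppB b X then (1:ℝ) else 0) * (if s ≤ suppB b Y then 1 else 0) with hφ
  set W : (Fin t → Fin n → Bool) → Ω → ℝ := fun b ω =>
    ∏ j, ∏ i, (if b j i then R i ω else 1 - R i ω) with hWdef
  set g : Ω → ℝ := fun ω => ∑ b : Fin t → Fin n → Bool, φ b * W b ω with hg
  set f : Ω → ℝ := fun ω => Z A s X ω * Z A s Y ω with hf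
  -- basic bounds
  have hW01 : ∀ b ω, 0 ≤ W b ω ∧ W b ω ≤ 1 := by
    intro b ω
    have h0 : ∀ j i, (0:ℝ) ≤ (if b j i then R i ω else 1 - R i ω) := by
      intro j i
      split
      · exact (hR01 i ω).1
      · linarith [(hR01 i ω).2]
    have h1 : ∀ j i, (if b j i then R i ω else 1 - R i ω) ≤ 1 := by
      intro j i
      split
      · exact (hR01 i ω).2
      · linarith [(hR01 i ω).1]
    constructor
    · exact Finset.prod_nonneg fun j _ => Finset.prod_nonneg fun i _ => h0 j i
    · exact Finset.prod_le_one
        (fun j _ => Finset.prod_nonneg fun i _ => h0 j i)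
        (fun j _ => Finset.prod_le_one (fun i _ => h0 j i) (fun i _ => h1 j i))
  have hφ01 : ∀ b, 0 ≤ φ b ∧ φ b ≤ 1 := by
    intro b
    simp only [hφ]
    constructor
    · positivity
    · split_ifs <;> norm_num
  have hWmeas : ∀ b, Measurable (W b) := by
    intro b
    refine Finset.measurable_prod _ fun j _ => Finset.measurable_prod _ fun i _ => ?_
    by_cases h : b j i
    · simpa [h] using hRmeas i
    · have hm' : Measurable fun ω => 1 - R i ω := measurable_const.sub (hRmeas i)
      simpa [h] using hm'
  have hWint' : ∀ b, Integrable (W b) μ := by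
    intro b
    refine Integrable.mono' (integrable_const 1) (hWmeas b).aestronglyMeasurable ?_
    filter_upwards with ω
    rw [Real.norm_eq_abs, abs_of_nonneg (hW01 b ω).1]
    exact (hW01 b ω).2
  have hWint : ∀ b, Integrable (fun ω => φ b * W b ω) μ :=
    fun b => (hWint' b).const_mul (φ b)
  have hgint : Integrable g μ := integrable_finset_sum _ fun b _ => hWint b
  -- measurability of Z and f
  have hsupp_meas : ∀ V : Finset (Fin n), Measurable (fun ω => support A V ω) := by
    intro V
    have he : (fun ω => support A V ω)
        = fun ω => ∑ j : Fin t, if ∀ i ∈ V, A j i ω = true then 1 else 0 := by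
      funext ω
      rw [support, Finset.card_filter]
    rw [he]
    refine Finset.measurable_sum _ fun j _ => Measurable.ite ?_ measurable_const
      measurable_const
    have he2 : {ω | ∀ i ∈ V, A j i ω = true}
        = ⋂ i ∈ (V : Set (Fin n)), {ω | A j i ω = true} := by
      ext ω; simp
    rw [he2]
    exact MeasurableSet.biInter (Set.to_countable _)
      (fun i _ => (hAmeas j i) (measurableSet_singleton true))
  have hZmeas : ∀ V : Finset (Fin n), Measurable (Z A s V) := by
    intro V
    exact Measurable.ite ((hsupp_meas V) measurableSet_Ici) measurable_const
      measurable_const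
  have hZ01 : ∀ (V : Finset (Fin n)) ω, 0 ≤ Z A s V ω ∧ Z A s V ω ≤ 1 := by
    intro V ω
    rw [Z]
    constructor <;> split <;> norm_num
  have hfint : Integrable f μ := by
    refine Integrable.mono' (integrable_const 1)
      (((hZmeas X).mul (hZmeas Y)).aestronglyMeasurable) ?_
    filter_upwards with ω
    rw [hf, Real.norm_eq_abs, abs_mul, abs_of_nonneg (hZ01 X ω).1,
      abs_of_nonneg (hZ01 Y ω).1]
    calc Z A s X ω * Z A s Y ω ≤ 1 * 1 :=
          mul_le_mul (hZ01 X ω).2 (hZ01 Y ω).2 (hZ01 Y ω).1 zero_le_one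
      _ = 1 := one_mul 1
  -- pattern sets
  have hDmeas : ∀ b : Fin t → Fin n → Bool,
      MeasurableSet {ω | ∀ j i, A j i ω = b j i} := by
    intro b
    have he : {ω | ∀ j i, A j i ω = b j i} = ⋂ j, ⋂ i, {ω | A j i ω = b j i} := by
      ext ω; simp
    rw [he]
    exact MeasurableSet.iInter fun j => MeasurableSet.iInter fun i =>
      (hAmeas j i) (measurableSet_singleton _)
  have hf_eq : ∀ ω, f ω = ∑ b : Fin t → Fin n → Bool,
      φ b * ({ω' | ∀ j i, A j i ω' = b j i}).indicator (fun _ => (1:ℝ)) ω := by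
    intro ω
    have h1 : ∀ b : Fin t → Fin n → Bool,
        φ b * ({ω' | ∀ j i, A j i ω' = b j i}).indicator (fun _ => (1:ℝ)) ω
        = if b = (fun j i => A j i ω) then φ b else 0 := by
      intro b
      rw [Set.indicator_apply]
      have hiff : (ω ∈ {ω' | ∀ j i, A j i ω' = b j i}) ↔ (b = fun j i => A j i ω) := by
        constructor
        · intro h
          funext j i
          exact (h j i).symm
        · intro h j i
          rw [h]
      rw [if_congr hiff rfl rfl]
      split <;> simp
    rw [Finset.sum_congr rfl fun b _ => h1 b, Finset.sum_ite_eq' Finset.univ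
      (fun j i => A j i ω) φ, if_pos (Finset.mem_univ _)]
    rfl
  -- identification of the conditional expectation
  have hsetint : ∀ C : Set Ω, MeasurableSet[sigmaR R] C → μ C < ⊤ →
      ∫ ω in C, g ω ∂μ = ∫ ω in C, f ω ∂μ := by
    intro C hC _
    obtain ⟨B, hB, hCB⟩ := hC
    have hCmeas : MeasurableSet C := hCB ▸ hπ hB
    have hWb : ∀ b : Fin t → Fin n → Bool,
        (μ (C ∩ {ω | ∀ j i, A j i ω = b j i})).toReal = ∫ ω in C, W b ω ∂μ := by
      intro b
      have hCset : C = {ω | (fun i => R i ω) ∈ B} := by rw [← hCB]; rfl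
      have hj := hjoint b B hB
      rw [← hCset] at hj
      rw [hj]
      have h1 : ∀ ω, (∏ j, ∏ i, ENNReal.ofReal (if b j i then R i ω else 1 - R i ω))
          = ENNReal.ofReal (W b ω) := by
        intro ω
        rw [hWdef]
        rw [ENNReal.ofReal_prod_of_nonneg]
        · refine Finset.prod_congr rfl fun j _ => ?_
          rw [ENNReal.ofReal_prod_of_nonneg]
          intro i _
          split
          · exact (hR01 i ω).1
          · linarith [(hR01 i ω).2]
        · intro j _
          refine Finset.prod_nonneg fun i _ => ?_
          split
          · exact (hR01 i ω).1
          · linarith [(hR01 i ω).2]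
      rw [lintegral_congr h1,
        ← MeasureTheory.ofReal_integral_eq_lintegral_ofReal
          (hWint' b).integrableOn
          (Filter.Eventually.of_forall fun ω => (hW01 b ω).1),
        ENNReal.toReal_ofReal]
      exact setIntegral_nonneg hCmeas fun ω _ => (hW01 b ω).1
    have hfC : ∫ ω in C, f ω ∂μ
        = ∑ b : Fin t → Fin n → Bool,
            φ b * (μ (C ∩ {ω | ∀ j i, A j i ω = b j i})).toReal := by
      rw [show (fun ω => f ω) = fun ω => ∑ b : Fin t → Fin n → Bool,
          φ b * ({ω' | ∀ j i, A j i ω' = b j i}).indicator (fun _ => (1:ℝ)) ω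
        from funext hf_eq]
      rw [integral_finset_sum _ fun b _ =>
        (((integrable_const (1:ℝ)).indicator (hDmeas b)).const_mul (φ b)).integrableOn]
      refine Finset.sum_congr rfl fun b _ => ?_
      rw [MeasureTheory.integral_const_mul, setIntegral_indicator (hDmeas b),
        setIntegral_const, smul_eq_mul, mul_one, measureReal_def]
    have hgC : ∫ ω in C, g ω ∂μ
        = ∑ b : Fin t → Fin n → Bool, φ b * ∫ ω in C, W b ω ∂μ := by
      rw [hg]
      rw [integral_finset_sum _ fun b _ => (hWint b).integrableOn]
      refine Finset.sum_congr rfl fun b _ => ?_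
      rw [MeasureTheory.integral_const_mul]
    rw [hgC, hfC]
    exact Finset.sum_congr rfl fun b _ => by rw [hWb b]
  have hπm : Measurable[sigmaR R] (fun ω (i : Fin n) => R i ω) := fun S hS => ⟨S, hS, rfl⟩
  have hGmeas : Measurable (fun v : Fin n → ℝ => ∑ b : Fin t → Fin n → Bool,
      φ b * ∏ j, ∏ i, (if b j i then v i else 1 - v i)) := by
    refine Finset.measurable_sum _ fun b _ => Measurable.const_mul ?_ (φ b)
    refine Finset.measurable_prod _ fun j _ => Finset.measurable_prod _ fun i _ => ?_
    by_cases h : b j i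
    · simpa [h] using measurable_pi_apply i
    · have hm' : Measurable fun v : Fin n → ℝ => 1 - v i :=
        measurable_const.sub (measurable_pi_apply i)
      simpa [h] using hm'
  have hgm : AEStronglyMeasurable[sigmaR R] g μ := by
    refine StronglyMeasurable.aestronglyMeasurable (Measurable.stronglyMeasurable ?_)
    exact hGmeas.comp hπm
  have hcond : g =ᵐ[μ] μ[f | sigmaR R] :=
    MeasureTheory.ae_eq_condExp_of_forall_setIntegral_eq hm hfint
      (fun C _ _ => hgint.integrableOn) hsetint hgm
  filter_upwards [hcond] with ω hω
  rw [← hω, hg]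
  exact pointwise_bound s (fun i => R i ω) (fun i => (hR01 i ω).1)
    (fun i => (hR01 i ω).2) hst X Y

end PaperModel
end
end

section
/- (Benjamini–Yekutieli) Let m ≥ 1 and let P_1, …, P_m be random variables with values in [0,1] (p-values), and let T ⊆ {1,…,m} be the set of indices of true null hypotheses, such that for every i ∈ T and every u ∈ [0,1], Pr(P_i ≤ u) ≤ u. Fix β ∈ (0,1). Let P_{(1)} ≤ … ≤ P_{(m)} be the order statistics of P_1,…,P_m, let ℓ = max{ i ≥ 0 : P_{(i)} ≤ (i · β)/(m · Σ_{j=1}^{m} 1/j) } (with ℓ = 0 if no i ≥ 1 satisfies the inequality), and reject the null hypotheses corresponding to the ℓ smallest p-values. Let R = ℓ and let V be the number of rejected indices belonging to T. Then E[(V/R) · 1_{R > 0}] ≤ β. -/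
open MeasureTheory Finset

noncomputable section

namespace BY

/-- The harmonic sum `Σ_{j=1}^{m} 1/j`. -/
def harm (m : ℕ) : ℝ := ∑ j ∈ Finset.Icc 1 m, (1 : ℝ) / j

/-- The Benjamini–Yekutieli rejection threshold for rank `i`: `(i·β)/(m·Σ_{j=1}^m 1/j)`. -/
def thr (m : ℕ) (β : ℝ) (i : ℕ) : ℝ := (i : ℝ) * β / ((m : ℝ) * harm m)

/-- The number `ℓ = R` of rejected hypotheses:
`ℓ = max{ i ≥ 0 : P_{(i)} ≤ (i·β)/(m·Σ_{j=1}^m 1/j) }` (with `ℓ = 0` if no `i ≥ 1`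
satisfies the inequality). Since the `i`-th order statistic satisfies `P_{(i)} ≤ u` iff at
least `i` of the p-values are `≤ u`, this maximum is expressed via counting. -/
def numRejected {Ω : Type*} {m : ℕ} (P : Fin m → Ω → ℝ) (β : ℝ) (ω : Ω) : ℕ :=
  sSup {i | i ≤ m ∧ i ≤ (Finset.univ.filter fun j => P j ω ≤ thr m β i).card}

/-- The number `V` of rejected true null hypotheses: the rejected hypotheses are those with
the `ℓ` smallest p-values, i.e. those `j` with `P_j ≤ thr m β ℓ`. -/
def numFalse {Ω : Type*} {m : ℕ} (P : Fin m → Ω → ℝ) (T : Finset (Fin m)) (β : ℝ)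
    (ω : Ω) : ℕ :=
  (T.filter fun j => P j ω ≤ thr m β (numRejected P β ω)).card

section Aux

lemma harm_nonneg (m : ℕ) : 0 ≤ harm m := by
  apply Finset.sum_nonneg; intro j _; positivity

lemma one_le_harm {m : ℕ} (hm : 1 ≤ m) : 1 ≤ harm m := by
  have h1 : (1 : ℕ) ∈ Finset.Icc 1 m := by simp [hm]
  have := Finset.single_le_sum (f := fun j : ℕ => (1 : ℝ) / j)
    (fun j _ => by positivity) h1
  simpa [harm] using this

lemma harm_eq_range (m : ℕ) : harm m = ∑ j ∈ Finset.range m, ((j : ℝ) + 1)⁻¹ := by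
  induction m with
  | zero => simp [harm]
  | succ n ih =>
    rw [harm, Finset.sum_Icc_succ_top (Nat.le_add_left 1 n), ← harm, ih,
      Finset.sum_range_succ]
    push_cast
    ring

lemma thr_zero (m : ℕ) (β : ℝ) : thr m β 0 = 0 := by simp [thr]

lemma thr_nonneg {m : ℕ} {β : ℝ} (hβ : 0 ≤ β) (i : ℕ) : 0 ≤ thr m β i := by
  have := harm_nonneg m
  unfold thr; positivity

lemma thr_mono {m : ℕ} {β : ℝ} (hβ : 0 ≤ β) {i i' : ℕ} (h : i ≤ i') :
    thr m β i ≤ thr m β i' := by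
  unfold thr
  have : (i:ℝ) ≤ i' := by exact_mod_cast h
  have := harm_nonneg m
  gcongr

lemma thr_le_one {m : ℕ} {β : ℝ} (hm : 1 ≤ m) (hβ0 : 0 ≤ β) (hβ1 : β ≤ 1)
    {i : ℕ} (hi : i ≤ m) : thr m β i ≤ 1 := by
  have hH := one_le_harm hm
  have hm0 : (0:ℝ) < m := by exact_mod_cast hm
  have h1 : thr m β i ≤ thr m β m := thr_mono hβ0 hi
  have h2 : thr m β m = β / harm m := by
    unfold thr; field_simp
  have h3 : β / harm m ≤ 1 := by
    rw [div_le_one (by linarith)]; linarith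
  linarith [h2 ▸ h1]

lemma thr_succ_sub {m : ℕ} {β : ℝ} (j : ℕ) :
    thr m β (j+1) - thr m β j = β / ((m : ℝ) * harm m) := by
  unfold thr
  push_cast
  ring

variable {Ω : Type*} [MeasurableSpace Ω] {m : ℕ} (P : Fin m → Ω → ℝ) (β : ℝ)

def cnt (i : ℕ) (ω : Ω) : ℕ := (Finset.univ.filter fun j => P j ω ≤ thr m β i).card

omit [MeasurableSpace Ω] in
lemma numRejected_mem (ω : Ω) :
    numRejected P β ω ≤ m ∧
      numRejected P β ω ≤ cnt P β (numRejected P β ω) ω := by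
  have h := Nat.sSup_mem (s := {i | i ≤ m ∧ i ≤ cnt P β i ω})
    ⟨0, by simp⟩ ⟨m, fun i hi => hi.1⟩
  exact h

omit [MeasurableSpace Ω] in
lemma le_numRejected {i : ℕ} {ω : Ω} (him : i ≤ m) (h : i ≤ cnt P β i ω) :
    i ≤ numRejected P β ω :=
  le_csSup ⟨m, fun _ hi => hi.1⟩ ⟨him, h⟩

omit [MeasurableSpace Ω] in
lemma le_numRejected_iff (k : ℕ) (ω : Ω) :
    k ≤ numRejected P β ω ↔ ∃ i, k ≤ i ∧ i ≤ m ∧ i ≤ cnt P β i ω := by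
  constructor
  · intro h
    exact ⟨numRejected P β ω, h, (numRejected_mem P β ω).1, (numRejected_mem P β ω).2⟩
  · rintro ⟨i, hki, him, hc⟩
    exact hki.trans (le_numRejected P β him hc)

lemma measurable_cnt (hPmeas : ∀ i, Measurable (P i)) (i : ℕ) :
    Measurable fun ω => cnt P β i ω := by
  unfold cnt
  simp only [Finset.card_filter]
  apply Finset.measurable_sum
  intro j _
  exact Measurable.ite (measurableSet_le (hPmeas j) measurable_const)
    measurable_const measurable_const

lemma measurableSet_le_numRejected (hPmeas : ∀ i, Measurable (P i)) (k : ℕ) :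
    MeasurableSet {ω : Ω | k ≤ numRejected P β ω} := by
  have : {ω : Ω | k ≤ numRejected P β ω}
      = ⋃ i ∈ Finset.Icc k m, {ω : Ω | i ≤ cnt P β i ω} := by
    ext ω
    simp only [Set.mem_setOf_eq, Set.mem_iUnion, Finset.mem_Icc, le_numRejected_iff]
    constructor
    · rintro ⟨i, h1, h2, h3⟩; exact ⟨i, ⟨h1, h2⟩, h3⟩
    · rintro ⟨i, ⟨h1, h2⟩, h3⟩; exact ⟨i, h1, h2, h3⟩
  rw [this]
  apply Finset.measurableSet_biUnion
  intro i _
  exact measurableSet_le measurable_const (measurable_cnt P β hPmeas i)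

lemma measurableSet_numRejected_eq (hPmeas : ∀ i, Measurable (P i)) (k : ℕ) :
    MeasurableSet {ω : Ω | numRejected P β ω = k} := by
  have : {ω : Ω | numRejected P β ω = k}
      = {ω : Ω | k ≤ numRejected P β ω} \ {ω : Ω | k + 1 ≤ numRejected P β ω} := by
    ext ω; simp only [Set.mem_setOf_eq, Set.mem_diff, Nat.add_one_le_iff, not_lt]
    omega
  rw [this]
  exact (measurableSet_le_numRejected P β hPmeas k).diff
    (measurableSet_le_numRejected P β hPmeas (k+1))

lemma abel_aux (b f t : ℕ → ℝ) (hb0 : ∀ j, 0 ≤ b j) (hba : ∀ j, b (j+1) ≤ b j)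
    (h0 : f 0 = t 0) :
    ∀ n, (∀ j, j ≤ n → f j ≤ t j) →
      ∑ j ∈ Finset.range n, b j * (f (j+1) - f j)
        ≤ ∑ j ∈ Finset.range n, b j * (t (j+1) - t j) + b n * (f n - t n) := by
  intro n
  induction n with
  | zero => simp [h0]
  | succ n ih =>
    intro h
    rw [Finset.sum_range_succ, Finset.sum_range_succ]
    have h1 := ih (fun j hj => h j (le_trans hj (Nat.le_succ n)))
    nlinarith [mul_nonneg (sub_nonneg.2 (hba n)) (sub_nonneg.2 (h (n+1) le_rfl))]

end Aux


/-- **Benjamini–Yekutieli.** Let `P_1, …, P_m` be p-values, `T` the set of true null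
hypotheses, with `Pr(P_i ≤ u) ≤ u` for every `i ∈ T` and `u ∈ [0,1]`, and `β ∈ (0,1)`.
Rejecting the null hypotheses corresponding to the `ℓ` smallest p-values, where
`ℓ = max{ i ≥ 0 : P_{(i)} ≤ (i·β)/(m·Σ_{j=1}^m 1/j) }`, and letting `R = ℓ` and `V` be the
number of rejected indices in `T`, we have `E[(V/R)·1_{R>0}] ≤ β` — under arbitrary
dependence of the p-values. -/
theorem benjamini_yekutieli
    {Ω : Type*} [MeasurableSpace Ω] (μ : Measure Ω) [IsProbabilityMeasure μ]
    (m : ℕ) (hm : 1 ≤ m)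
    (P : Fin m → Ω → ℝ)
    (hPmeas : ∀ i, Measurable (P i))
    (hP01 : ∀ i ω, P i ω ∈ Set.Icc (0 : ℝ) 1)
    (T : Finset (Fin m))
    (hT : ∀ i ∈ T, ∀ u ∈ Set.Icc (0 : ℝ) 1, μ {ω | P i ω ≤ u} ≤ ENNReal.ofReal u)
    (β : ℝ) (hβ : β ∈ Set.Ioo (0 : ℝ) 1) :
    ∫ ω, Set.indicator {ω' | 0 < numRejected P β ω'}
        (fun ω' => (numFalse P T β ω' : ℝ) / (numRejected P β ω' : ℝ)) ω ∂μ ≤ β := by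
  obtain ⟨hβ0, hβ1⟩ := hβ
  have hm0 : (0:ℝ) < m := by exact_mod_cast hm
  set N : Ω → ℕ := numRejected P β with hNdef
  set A : ℕ → Fin m → Set Ω := fun k i =>
    {ω | N ω = k} ∩ {ω | P i ω ≤ thr m β k} with hAdef
  have hAmeas : ∀ k i, MeasurableSet (A k i) := fun k i =>
    (measurableSet_numRejected_eq P β hPmeas k).inter
      (measurableSet_le (hPmeas i) measurable_const)
  -- pointwise identity
  have hpt : ∀ ω, Set.indicator {ω' | 0 < N ω'}
      (fun ω' => (numFalse P T β ω' : ℝ) / (N ω' : ℝ)) ω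
      = ∑ k ∈ Finset.Icc 1 m, ∑ i ∈ T,
          (A k i).indicator (fun _ => ((k : ℝ))⁻¹) ω := by
    intro ω
    by_cases h0 : 0 < N ω
    · rw [Set.indicator_of_mem (show ω ∈ {ω' | 0 < N ω'} from h0)]
      have hkm : N ω ∈ Finset.Icc 1 m :=
        Finset.mem_Icc.2 ⟨h0, (numRejected_mem P β ω).1⟩
      rw [Finset.sum_eq_single_of_mem (N ω) hkm (by
        intro k _ hk
        apply Finset.sum_eq_zero
        intro i _
        apply Set.indicator_of_notMem
        exact fun hmem => hk (hmem.1.symm))]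
      have hinner : ∀ i ∈ T, (A (N ω) i).indicator (fun _ => ((N ω : ℝ))⁻¹) ω
          = if P i ω ≤ thr m β (N ω) then ((N ω : ℝ))⁻¹ else 0 := by
        intro i _
        by_cases hi : P i ω ≤ thr m β (N ω)
        · rw [Set.indicator_of_mem (Set.mem_inter (show ω ∈ {ω'' | N ω'' = N ω} from rfl) hi), if_pos hi]
        · rw [Set.indicator_of_notMem (fun hmem => hi hmem.2), if_neg hi]
      rw [Finset.sum_congr rfl hinner, Finset.sum_ite, Finset.sum_const,
        Finset.sum_const_zero, add_zero, nsmul_eq_mul]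
      rw [numFalse, div_eq_mul_inv]
    · rw [Set.indicator_of_notMem (show ω ∉ {ω' | 0 < N ω'} from h0)]
      symm
      apply Finset.sum_eq_zero; intro k hk
      apply Finset.sum_eq_zero; intro i _
      apply Set.indicator_of_notMem
      intro hmem
      rw [Finset.mem_Icc] at hk
      have h1 : N ω = k := hmem.1
      omega
  -- integral identity
  have hInt : ∫ ω, Set.indicator {ω' | 0 < N ω'}
      (fun ω' => (numFalse P T β ω' : ℝ) / (N ω' : ℝ)) ω ∂μ
      = ∑ k ∈ Finset.Icc 1 m, ∑ i ∈ T, (μ (A k i)).toReal * ((k : ℝ))⁻¹ := by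
    rw [integral_congr_ae (Filter.Eventually.of_forall hpt)]
    rw [integral_finset_sum _ (fun k _ => integrable_finset_sum _
      (fun i _ => (integrable_const _).indicator (hAmeas k i)))]
    refine Finset.sum_congr rfl (fun k _ => ?_)
    rw [integral_finset_sum _ (fun i _ => (integrable_const _).indicator (hAmeas k i))]
    refine Finset.sum_congr rfl (fun i _ => ?_)
    rw [integral_indicator_const _ (hAmeas k i), smul_eq_mul]; rfl
  rw [hInt]
  -- key per-index bound
  have key : ∀ i ∈ T, ∑ k ∈ Finset.Icc 1 m, (μ (A k i)).toReal * ((k : ℝ))⁻¹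
      ≤ β / m := by
    intro i hi
    set B : ℕ → Set Ω := fun j =>
      {ω | P i ω ≤ thr m β (j+1)} \ {ω | P i ω ≤ thr m β j} with hBdef
    have hBmeas : ∀ j, MeasurableSet (B j) := fun j =>
      (measurableSet_le (hPmeas i) measurable_const).diff
        (measurableSet_le (hPmeas i) measurable_const)
    set F : ℕ → ℝ := fun j => (μ {ω | P i ω ≤ thr m β j}).toReal with hFdef
    have hμZ : μ {ω | P i ω ≤ thr m β 0} = 0 := by
      rw [thr_zero]
      have := hT i hi 0 ⟨le_rfl, zero_le_one⟩
      simpa using this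
    have hF0 : F 0 = thr m β 0 := by
      have h1 : F 0 = 0 := by simp [hFdef, hμZ]
      rw [h1, thr_zero]
    have hFle : ∀ j, j ≤ m → F j ≤ thr m β j := by
      intro j hj
      have h := hT i hi (thr m β j) ⟨thr_nonneg (le_of_lt hβ0) j,
        thr_le_one hm (le_of_lt hβ0) (le_of_lt hβ1) hj⟩
      exact ENNReal.toReal_le_of_le_ofReal (thr_nonneg (le_of_lt hβ0) j) h
    -- step 1 : subset decomposition
    have hsub : ∀ k, 1 ≤ k → A k i ⊆ {ω | P i ω ≤ thr m β 0}
        ∪ ⋃ j ∈ Finset.range k, ({ω | N ω = k} ∩ B j) := by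
      intro k hk ω hω
      obtain ⟨hNk, hPk⟩ := hω
      by_cases hz : P i ω ≤ thr m β 0
      · exact Or.inl hz
      · right
        push_neg at hz
        set s := (Finset.range k).filter (fun l => thr m β l < P i ω) with hs
        have hne : s.Nonempty := ⟨0, Finset.mem_filter.2 ⟨Finset.mem_range.2 hk, hz⟩⟩
        set j := s.max' hne with hj
        have hjmem : j ∈ s := s.max'_mem hne
        have hjk : j ∈ Finset.range k := (Finset.mem_filter.1 hjmem).1
        have hjlt : thr m β j < P i ω := (Finset.mem_filter.1 hjmem).2
        have hjub : P i ω ≤ thr m β (j+1) := by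
          rcases Nat.lt_or_ge (j+1) k with h | h
          · by_contra hcon
            push_neg at hcon
            have hmem2 : j + 1 ∈ s := Finset.mem_filter.2 ⟨Finset.mem_range.2 h, hcon⟩
            have := s.le_max' _ hmem2
            omega
          · have hjk' := Finset.mem_range.1 hjk
            have hjk2 : j + 1 = k := by omega
            rw [hjk2]; exact hPk
        exact Set.mem_biUnion hjk ⟨hNk, hjub, not_le.2 hjlt⟩
    -- step 1 in reals
    have step1 : ∀ k ∈ Finset.Icc 1 m, (μ (A k i)).toReal * ((k:ℝ))⁻¹
        ≤ ∑ j ∈ Finset.range k, (μ ({ω | N ω = k} ∩ B j)).toReal * ((j:ℝ)+1)⁻¹ := by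
      intro k hk
      rw [Finset.mem_Icc] at hk
      have h1 : μ (A k i) ≤ ∑ j ∈ Finset.range k, μ ({ω | N ω = k} ∩ B j) := by
        calc μ (A k i) ≤ μ ({ω | P i ω ≤ thr m β 0}
              ∪ ⋃ j ∈ Finset.range k, ({ω | N ω = k} ∩ B j)) :=
            measure_mono (hsub k hk.1)
          _ ≤ μ {ω | P i ω ≤ thr m β 0}
              + μ (⋃ j ∈ Finset.range k, ({ω | N ω = k} ∩ B j)) := measure_union_le _ _
          _ = μ (⋃ j ∈ Finset.range k, ({ω | N ω = k} ∩ B j)) := by rw [hμZ, zero_add]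
          _ ≤ ∑ j ∈ Finset.range k, μ ({ω | N ω = k} ∩ B j) := measure_biUnion_finset_le _ _
      have h1R : (μ (A k i)).toReal
          ≤ ∑ j ∈ Finset.range k, (μ ({ω | N ω = k} ∩ B j)).toReal := by
        rw [← ENNReal.toReal_sum (fun j _ => measure_ne_top μ _)]
        exact ENNReal.toReal_mono (ENNReal.sum_ne_top.2 (fun j _ => measure_ne_top μ _)) h1
      calc (μ (A k i)).toReal * ((k:ℝ))⁻¹
          ≤ (∑ j ∈ Finset.range k, (μ ({ω | N ω = k} ∩ B j)).toReal) * ((k:ℝ))⁻¹ := by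
            apply mul_le_mul_of_nonneg_right h1R
            positivity
        _ = ∑ j ∈ Finset.range k, (μ ({ω | N ω = k} ∩ B j)).toReal * ((k:ℝ))⁻¹ := by
            rw [Finset.sum_mul]
        _ ≤ ∑ j ∈ Finset.range k, (μ ({ω | N ω = k} ∩ B j)).toReal * ((j:ℝ)+1)⁻¹ := by
            apply Finset.sum_le_sum
            intro j hj
            apply mul_le_mul_of_nonneg_left _ ENNReal.toReal_nonneg
            apply inv_anti₀ (by positivity)
            have : j + 1 ≤ k := Finset.mem_range.1 hj
            exact_mod_cast this
    -- combine and swap sums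
    have swap : ∑ k ∈ Finset.Icc 1 m, ∑ j ∈ Finset.range k,
          (μ ({ω | N ω = k} ∩ B j)).toReal * ((j:ℝ)+1)⁻¹
        = ∑ j ∈ Finset.range m, ∑ k ∈ Finset.Icc (j+1) m,
          (μ ({ω | N ω = k} ∩ B j)).toReal * ((j:ℝ)+1)⁻¹ := by
      apply Finset.sum_comm'
      intro k j
      simp only [Finset.mem_Icc, Finset.mem_range]
      omega
    -- inner disjoint union bound
    have step3 : ∀ j ∈ Finset.range m,
        ∑ k ∈ Finset.Icc (j+1) m, (μ ({ω | N ω = k} ∩ B j)).toReal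
          ≤ F (j+1) - F j := by
      intro j _
      have hdisj : (↑(Finset.Icc (j+1) m) : Set ℕ).PairwiseDisjoint
          (fun k => {ω | N ω = k} ∩ B j) := by
        intro a _ b _ hab
        apply Set.disjoint_left.2
        rintro ω ⟨ha, _⟩ ⟨hb, _⟩
        exact hab (ha.symm.trans hb)
      have hUnion : μ (⋃ k ∈ Finset.Icc (j+1) m, ({ω | N ω = k} ∩ B j))
          = ∑ k ∈ Finset.Icc (j+1) m, μ ({ω | N ω = k} ∩ B j) :=
        measure_biUnion_finset hdisj (fun k _ =>
          (measurableSet_numRejected_eq P β hPmeas k).inter (hBmeas j))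
      have hsubB : (⋃ k ∈ Finset.Icc (j+1) m, ({ω | N ω = k} ∩ B j)) ⊆ B j := by
        intro ω hω
        obtain ⟨k, _, hk⟩ := Set.mem_iUnion₂.1 hω
        exact hk.2
      have hμB : (μ (B j)).toReal = F (j+1) - F j := by
        rw [hBdef]
        have hss : {ω | P i ω ≤ thr m β j} ⊆ {ω | P i ω ≤ thr m β (j+1)} :=
          fun ω hω => le_trans hω (thr_mono (le_of_lt hβ0) (Nat.le_succ j))
        rw [measure_diff hss (measurableSet_le (hPmeas i) measurable_const).nullMeasurableSet
          (measure_ne_top μ _)]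
        rw [ENNReal.toReal_sub_of_le (measure_mono hss) (measure_ne_top μ _)]
      calc ∑ k ∈ Finset.Icc (j+1) m, (μ ({ω | N ω = k} ∩ B j)).toReal
          = (μ (⋃ k ∈ Finset.Icc (j+1) m, ({ω | N ω = k} ∩ B j))).toReal := by
            rw [hUnion, ENNReal.toReal_sum (fun k _ => measure_ne_top μ _)]
        _ ≤ (μ (B j)).toReal := by
            apply ENNReal.toReal_mono (measure_ne_top μ _) (measure_mono hsubB)
        _ = F (j+1) - F j := hμB
    -- abel
    have abel : ∑ j ∈ Finset.range m, ((j:ℝ)+1)⁻¹ * (F (j+1) - F j)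
        ≤ ∑ j ∈ Finset.range m, ((j:ℝ)+1)⁻¹ * (thr m β (j+1) - thr m β j) := by
      have h := abel_aux (fun j => ((j:ℝ)+1)⁻¹) F (thr m β)
        (fun j => by positivity)
        (fun j => by
          apply inv_anti₀ (by positivity)
          push_cast; linarith)
        hF0 m hFle
      have hlast : ((m:ℝ)+1)⁻¹ * (F m - thr m β m) ≤ 0 := by
        apply mul_nonpos_of_nonneg_of_nonpos (by positivity)
        linarith [hFle m le_rfl]
      linarith
    -- compute the final sum
    have hfinal : ∑ j ∈ Finset.range m, ((j:ℝ)+1)⁻¹ * (thr m β (j+1) - thr m β j)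
        = β / m := by
      have hH := one_le_harm hm
      have : ∀ j ∈ Finset.range m, ((j:ℝ)+1)⁻¹ * (thr m β (j+1) - thr m β j)
          = ((j:ℝ)+1)⁻¹ * (β / ((m : ℝ) * harm m)) := by
        intro j _; rw [thr_succ_sub]
      rw [Finset.sum_congr rfl this, ← Finset.sum_mul, ← harm_eq_range]
      field_simp
    -- chain everything
    calc ∑ k ∈ Finset.Icc 1 m, (μ (A k i)).toReal * ((k : ℝ))⁻¹
        ≤ ∑ k ∈ Finset.Icc 1 m, ∑ j ∈ Finset.range k,
            (μ ({ω | N ω = k} ∩ B j)).toReal * ((j:ℝ)+1)⁻¹ := Finset.sum_le_sum step1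
      _ = ∑ j ∈ Finset.range m, ∑ k ∈ Finset.Icc (j+1) m,
            (μ ({ω | N ω = k} ∩ B j)).toReal * ((j:ℝ)+1)⁻¹ := swap
      _ = ∑ j ∈ Finset.range m, (∑ k ∈ Finset.Icc (j+1) m,
            (μ ({ω | N ω = k} ∩ B j)).toReal) * ((j:ℝ)+1)⁻¹ := by
            refine Finset.sum_congr rfl (fun j _ => ?_); rw [Finset.sum_mul]
      _ ≤ ∑ j ∈ Finset.range m, (F (j+1) - F j) * ((j:ℝ)+1)⁻¹ := by
            apply Finset.sum_le_sum
            intro j hj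
            exact mul_le_mul_of_nonneg_right (step3 j hj) (by positivity)
      _ = ∑ j ∈ Finset.range m, ((j:ℝ)+1)⁻¹ * (F (j+1) - F j) := by
            refine Finset.sum_congr rfl (fun j _ => mul_comm _ _)
      _ ≤ ∑ j ∈ Finset.range m, ((j:ℝ)+1)⁻¹ * (thr m β (j+1) - thr m β j) := abel
      _ = β / m := hfinal
  -- sum over i ∈ T
  calc ∑ k ∈ Finset.Icc 1 m, ∑ i ∈ T, (μ (A k i)).toReal * ((k : ℝ))⁻¹
      = ∑ i ∈ T, ∑ k ∈ Finset.Icc 1 m, (μ (A k i)).toReal * ((k : ℝ))⁻¹ :=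
        Finset.sum_comm
    _ ≤ ∑ _i ∈ T, β / m := Finset.sum_le_sum key
    _ = T.card * (β / m) := by rw [Finset.sum_const, nsmul_eq_mul]
    _ ≤ m * (β / m) := by
        apply mul_le_mul_of_nonneg_right _ (by positivity)
        have : T.card ≤ m := by
          simpa using Finset.card_le_univ T
        exact_mod_cast this
    _ = β := by field_simp
end BY
end
end
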